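/- There is a universal constant C > 0 such that for every finitely supported function φ : ℍ → H into a Hilbert space H: ∑_{x ∈ ℍ} ∑_{k=1}^{∞} ‖φ(xc^k) − φ(x)‖² / k² ≤ C · ∑_{x ∈ ℍ} ( ‖φ(xa) − φ(x)‖² + ‖φ(xb) − φ(x)‖² ), where c = aba⁻¹b⁻¹. -/

import Mathlib

open scoped BigOperators

/-- The discrete Heisenberg group `ℍ`, realized via the coordinates of the
3×3 upper-triangular integer matrices `[[1, x, z], [0, 1, y], [0, 0, 1]]`
with unit diagonal. -/
@[ext] structure Heis where
  x : ℤ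
  y : ℤ
  z : ℤ

namespace Heis

instance : One Heis := ⟨⟨0, 0, 0⟩⟩
instance : Mul Heis := ⟨fun g h => ⟨g.x + h.x, g.y + h.y, g.z + h.z + g.x * h.y⟩⟩
instance : Inv Heis := ⟨fun g => ⟨-g.x, -g.y, -g.z + g.x * g.y⟩⟩

@[simp] lemma mul_def (g h : Heis) :
    g * h = ⟨g.x + h.x, g.y + h.y, g.z + h.z + g.x * h.y⟩ := rfl
@[simp] lemma one_def : (1 : Heis) = ⟨0, 0, 0⟩ := rfl
@[simp] lemma inv_def (g : Heis) : g⁻¹ = ⟨-g.x, -g.y, -g.z + g.x * g.y⟩ := rfl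

instance : Group Heis where
  mul_assoc g h k := by ext <;> simp <;> ring
  one_mul g := by ext <;> simp
  mul_one g := by ext <;> simp
  inv_mul_cancel g := by ext <;> simp <;> ring

/-- The generator `a`. -/
def A : Heis := ⟨1, 0, 0⟩
/-- The generator `b`. -/
def B : Heis := ⟨0, 1, 0⟩
/-- The commutator `c = a * b * a⁻¹ * b⁻¹`, a central element. -/
def C : Heis := A * B * A⁻¹ * B⁻¹
/-- The symmetric generating set `S = {a, b, a⁻¹, b⁻¹}`. -/
def S : Set Heis := {A, B, A⁻¹, B⁻¹}

/-- The word length of `g` with respect to the generating set `S`. -/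
noncomputable def wordLength (g : Heis) : ℕ :=
  sInf {n : ℕ | ∃ l : List Heis, l.length = n ∧ (∀ s ∈ l, s ∈ S) ∧ l.prod = g}

/-- The left-invariant word metric `d_W` on `ℍ` associated to `S`. -/
noncomputable def dW (g h : Heis) : ℕ := wordLength (g⁻¹ * h)

end Heis



open scoped BigOperators
open Finset

namespace HeisAux

/-- Shift-invariance of sums over a large enough finset. -/
lemma sum_shift {ι M : Type*} [AddCommGroup ι] [DecidableEq ι] [AddCommMonoid M]
    (f : ι → M) (Ω : Finset ι) (e : ι) (h : ∀ p, f p ≠ 0 → p ∈ Ω ∧ p - e ∈ Ω) :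
    ∑ p ∈ Ω, f (p + e) = ∑ p ∈ Ω, f p := by
  have himg : ∑ p ∈ Ω, f (p + e) = ∑ q ∈ Ω.image (· + e), f q := by
    rw [Finset.sum_image]
    intro a _ b _ hab
    exact add_right_cancel hab
  rw [himg]
  have h1 : Ω.image (· + e) ⊆ Ω ∪ Ω.image (· + e) := subset_union_right
  have h2 : Ω ⊆ Ω ∪ Ω.image (· + e) := subset_union_left
  rw [Finset.sum_subset h1, Finset.sum_subset h2]
  · intro x _ hx
    by_contra hfx
    exact hx ((h x hfx).1)
  · intro x _ hx
    by_contra hfx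
    apply hx
    rw [Finset.mem_image]
    exact ⟨x - e, (h x hfx).2, by abel⟩

variable {K : Type*} [NormedAddCommGroup K] [InnerProductSpace ℝ K]

/-- Cauchy–Schwarz for finite sums of inner products. -/
lemma sum_inner_le {ι : Type*} (s : Finset ι) (X Y : ι → K) :
    |∑ i ∈ s, (inner ℝ (X i) (Y i) : ℝ)| ≤
      Real.sqrt (∑ i ∈ s, ‖X i‖ ^ 2) * Real.sqrt (∑ i ∈ s, ‖Y i‖ ^ 2) := by
  have h1 : |∑ i ∈ s, (inner ℝ (X i) (Y i) : ℝ)| ≤ ∑ i ∈ s, ‖X i‖ * ‖Y i‖ := by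
    refine (Finset.abs_sum_le_sum_abs _ _).trans (Finset.sum_le_sum fun i _ => ?_)
    exact abs_real_inner_le_norm (X i) (Y i)
  refine h1.trans ?_
  have h2 := Finset.sum_mul_sq_le_sq_mul_sq s (fun i => ‖X i‖) (fun i => ‖Y i‖)
  have h3 : 0 ≤ ∑ i ∈ s, ‖X i‖ ^ 2 := Finset.sum_nonneg fun i _ => sq_nonneg _
  have h4 : 0 ≤ ∑ i ∈ s, ‖Y i‖ ^ 2 := Finset.sum_nonneg fun i _ => sq_nonneg _
  have h5 : 0 ≤ ∑ i ∈ s, ‖X i‖ * ‖Y i‖ :=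
    Finset.sum_nonneg fun i _ => mul_nonneg (norm_nonneg _) (norm_nonneg _)
  rw [← Real.sqrt_mul h3]
  exact (Real.le_sqrt h5 (mul_nonneg h3 h4)).2 h2

/-- Minkowski-type inequality for finite `ℓ²` sums. -/
lemma sum_sq_add_le {ι : Type*} (s : Finset ι) (X Y : ι → K) :
    ∑ i ∈ s, ‖X i + Y i‖ ^ 2 ≤
      (Real.sqrt (∑ i ∈ s, ‖X i‖ ^ 2) + Real.sqrt (∑ i ∈ s, ‖Y i‖ ^ 2)) ^ 2 := by
  have expand : ∀ i, ‖X i + Y i‖ ^ 2 = ‖X i‖ ^ 2 + 2 * (inner ℝ (X i) (Y i) : ℝ) + ‖Y i‖ ^ 2 :=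
    fun i => norm_add_sq_real (X i) (Y i)
  have h1 : ∑ i ∈ s, ‖X i + Y i‖ ^ 2
      = ∑ i ∈ s, ‖X i‖ ^ 2 + 2 * ∑ i ∈ s, (inner ℝ (X i) (Y i) : ℝ) + ∑ i ∈ s, ‖Y i‖ ^ 2 := by
    simp_rw [expand]
    rw [Finset.sum_add_distrib, Finset.sum_add_distrib, Finset.mul_sum]
  have h2 := sum_inner_le s X Y
  have h3 : 0 ≤ ∑ i ∈ s, ‖X i‖ ^ 2 := Finset.sum_nonneg fun i _ => sq_nonneg _
  have h4 : 0 ≤ ∑ i ∈ s, ‖Y i‖ ^ 2 := Finset.sum_nonneg fun i _ => sq_nonneg _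
  have h5 := Real.sq_sqrt h3
  have h6 := Real.sq_sqrt h4
  have h7 := abs_le.1 h2
  nlinarith [h7.2]

end HeisAux


open scoped BigOperators RealInnerProductSpace
open Finset

namespace HeisAux

set_option linter.unusedSectionVars false

variable {H : Type*} [NormedAddCommGroup H] [InnerProductSpace ℝ H]

/-- Pair constructor for `WithLp 2 (H × H)`. -/
noncomputable def pair (u v : H) : WithLp 2 (H × H) := (WithLp.equiv 2 (H × H)).symm (u, v)

@[simp] lemma pair_fst (u v : H) : (pair u v).fst = u := rfl
@[simp] lemma pair_snd (u v : H) : (pair u v).snd = v := rfl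

lemma Kext {w w' : WithLp 2 (H × H)} (h1 : w.fst = w'.fst) (h2 : w.snd = w'.snd) : w = w' := by
  apply (WithLp.equiv 2 (H × H)).injective
  exact Prod.ext h1 h2

lemma inner_expand (w w' : WithLp 2 (H × H)) :
    ⟪w, w'⟫ = ⟪w.fst, w'.fst⟫ + ⟪w.snd, w'.snd⟫ := by
  rw [WithLp.prod_inner_apply]
  rfl

lemma norm_sq_expand (w : WithLp 2 (H × H)) : ‖w‖ ^ 2 = ‖w.fst‖ ^ 2 + ‖w.snd‖ ^ 2 :=
  WithLp.prod_norm_sq_eq_of_L2 w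

/-- Rotation by angle `α` acting on `H × H` (playing the role of `e^{iα}`). -/
noncomputable def rot (α : ℝ) (w : WithLp 2 (H × H)) : WithLp 2 (H × H) :=
  pair (Real.cos α • w.fst + Real.sin α • w.snd) (-Real.sin α • w.fst + Real.cos α • w.snd)

/-- Multiplication by `i` (the symplectic map `J`). -/
noncomputable def Jop (w : WithLp 2 (H × H)) : WithLp 2 (H × H) := pair (-w.snd) w.fst

@[simp] lemma rot_fst (α : ℝ) (w : WithLp 2 (H × H)) :
    (rot α w).fst = Real.cos α • w.fst + Real.sin α • w.snd := rfl
@[simp] lemma rot_snd (α : ℝ) (w : WithLp 2 (H × H)) :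
    (rot α w).snd = -Real.sin α • w.fst + Real.cos α • w.snd := rfl
@[simp] lemma Jop_fst (w : WithLp 2 (H × H)) : (Jop w).fst = -w.snd := rfl
@[simp] lemma Jop_snd (w : WithLp 2 (H × H)) : (Jop w).snd = w.fst := rfl

lemma rot_sub (α : ℝ) (w w' : WithLp 2 (H × H)) :
    rot α (w - w') = rot α w - rot α w' := by
  refine Kext ?_ ?_ <;>
    simp only [rot_fst, rot_snd, WithLp.sub_fst, WithLp.sub_snd] <;> module

@[simp] lemma rot_zero (w : WithLp 2 (H × H)) : rot 0 w = w := by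
  refine Kext ?_ ?_ <;> simp

@[simp] lemma rot_zero' (α : ℝ) : rot α (0 : WithLp 2 (H × H)) = 0 := by
  refine Kext ?_ ?_ <;> simp [WithLp.zero_fst, WithLp.zero_snd]

lemma rot_rot (α β : ℝ) (w : WithLp 2 (H × H)) : rot α (rot β w) = rot (α + β) w := by
  refine Kext ?_ ?_ <;> simp only [rot_fst, rot_snd, Real.cos_add, Real.sin_add] <;> module

lemma inner_rot_rot (α : ℝ) (w w' : WithLp 2 (H × H)) :
    ⟪rot α w, rot α w'⟫ = ⟪w, w'⟫ := by
  simp only [inner_expand, rot_fst, rot_snd, inner_add_left, inner_add_right,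
    real_inner_smul_left, real_inner_smul_right]
  have h1 := Real.sin_sq_add_cos_sq α
  linear_combination (⟪w.fst, w'.fst⟫ + ⟪w.snd, w'.snd⟫) * h1

lemma norm_rot (α : ℝ) (w : WithLp 2 (H × H)) : ‖rot α w‖ = ‖w‖ := by
  have h := inner_rot_rot α w w
  rw [real_inner_self_eq_norm_sq, real_inner_self_eq_norm_sq] at h
  nlinarith [norm_nonneg (rot α w), norm_nonneg w]

lemma inner_rot_left (α : ℝ) (w w' : WithLp 2 (H × H)) :
    ⟪rot α w, w'⟫ = ⟪w, rot (-α) w'⟫ := by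
  rw [← inner_rot_rot (-α) (rot α w) w', rot_rot]
  norm_num

lemma inner_rot_self (α : ℝ) (w : WithLp 2 (H × H)) :
    ⟪rot α w, w⟫ = Real.cos α * ‖w‖ ^ 2 := by
  simp only [inner_expand, rot_fst, rot_snd, inner_add_left, real_inner_smul_left,
    norm_sq_expand]
  have h2 : ⟪w.snd, w.fst⟫ = ⟪w.fst, w.snd⟫ := real_inner_comm _ _
  rw [real_inner_self_eq_norm_sq, real_inner_self_eq_norm_sq, h2]
  ring

lemma inner_rot_J (α : ℝ) (w : WithLp 2 (H × H)) :
    ⟪rot α w, Jop w⟫ = -Real.sin α * ‖w‖ ^ 2 := by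
  simp only [inner_expand, rot_fst, rot_snd, Jop_fst, Jop_snd, inner_add_left,
    real_inner_smul_left, inner_neg_right, norm_sq_expand]
  have h2 : ⟪w.snd, w.fst⟫ = ⟪w.fst, w.snd⟫ := real_inner_comm _ _
  rw [real_inner_self_eq_norm_sq, real_inner_self_eq_norm_sq, h2]
  ring

lemma inner_J_self (w : WithLp 2 (H × H)) : ⟪w, Jop w⟫ = 0 := by
  simp only [inner_expand, Jop_fst, Jop_snd, inner_neg_right]
  rw [real_inner_comm]; ring

lemma norm_J (w : WithLp 2 (H × H)) : ‖Jop w‖ = ‖w‖ := by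
  have h : ‖Jop w‖ ^ 2 = ‖w‖ ^ 2 := by
    simp only [norm_sq_expand, Jop_fst, Jop_snd, norm_neg]; ring
  nlinarith [norm_nonneg (Jop w), norm_nonneg w]

lemma J_rot (α : ℝ) (w : WithLp 2 (H × H)) : Jop (rot α w) = rot α (Jop w) := by
  refine Kext ?_ ?_ <;> simp only [Jop_fst, Jop_snd, rot_fst, rot_snd] <;> module

lemma J_sub (w w' : WithLp 2 (H × H)) : Jop (w - w') = Jop w - Jop w' := by
  refine Kext ?_ ?_ <;>
    simp only [Jop_fst, Jop_snd, WithLp.sub_fst, WithLp.sub_snd] <;> abel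

lemma norm_rot_sub_self_sq (α : ℝ) (w : WithLp 2 (H × H)) :
    ‖rot α w - w‖ ^ 2 = (2 - 2 * Real.cos α) * ‖w‖ ^ 2 := by
  rw [norm_sub_sq_real, norm_rot, inner_rot_self]
  ring

end HeisAux


open scoped BigOperators
open Finset

namespace HeisAux

/-- Discrete orthogonality of characters. -/
lemma cos_sum_eq (N : ℕ) (hN : 0 < N) (m : ℤ) :
    ∑ j ∈ Finset.range N, Real.cos (2 * Real.pi * j / N * m) =
      if (N : ℤ) ∣ m then (N : ℝ) else 0 := by
  have key : ∀ j : ℕ, Real.cos (2 * Real.pi * j / N * m)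
      = (Complex.exp (2 * Real.pi * m / N * Complex.I) ^ j).re := by
    intro j
    rw [← Complex.exp_nat_mul]
    have : (j : ℂ) * (2 * Real.pi * m / N * Complex.I)
        = ((2 * Real.pi * j / N * m : ℝ) : ℂ) * Complex.I := by
      push_cast
      ring
    rw [this, Complex.exp_ofReal_mul_I_re]
  simp_rw [key]
  rw [← Complex.re_sum]
  by_cases hdvd : (N : ℤ) ∣ m
  · obtain ⟨c, hc⟩ := hdvd
    have hz : Complex.exp (2 * Real.pi * m / N * Complex.I) = 1 := by
      have : (2 * Real.pi * m / N * Complex.I) = (c : ℤ) * (2 * Real.pi * Complex.I) := by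
        have hN' : (N : ℂ) ≠ 0 := by exact_mod_cast Nat.cast_ne_zero.2 hN.ne'
        field_simp [hc]
        push_cast
        rw [hc]; push_cast; ring
      rw [this, Complex.exp_int_mul_two_pi_mul_I]
    rw [if_pos ⟨c, hc⟩]
    simp [hz]
  · have hz : Complex.exp (2 * Real.pi * m / N * Complex.I) ≠ 1 := by
      intro hone
      rw [Complex.exp_eq_one_iff] at hone
      obtain ⟨n, hn⟩ := hone
      have hπ : (Real.pi : ℂ) ≠ 0 := by exact_mod_cast Real.pi_ne_zero
      have hI : Complex.I ≠ 0 := Complex.I_ne_zero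
      have hN' : (N : ℂ) ≠ 0 := by exact_mod_cast Nat.cast_ne_zero.2 hN.ne'
      apply hdvd
      refine ⟨n, ?_⟩
      have h2c : (m : ℂ) = n * N := by
        field_simp at hn
        have h2 : (2 : ℂ) ≠ 0 := two_ne_zero
        -- hn : 2 * π * m * I = n * (2 * π * I) * N  (after field_simp, roughly)
        apply mul_left_cancel₀ h2
        apply mul_left_cancel₀ hπ
        apply mul_right_cancel₀ hI
        push_cast at hn ⊢
        linear_combination (2 * (Real.pi : ℂ) * Complex.I) * hn
      have h3 : m = n * (N:ℤ) := by exact_mod_cast h2c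
      rw [h3, mul_comm]
    rw [geom_sum_eq hz, if_neg hdvd]
    have : Complex.exp (2 * Real.pi * m / N * Complex.I) ^ N = 1 := by
      rw [← Complex.exp_nat_mul]
      have hN' : (N : ℂ) ≠ 0 := by exact_mod_cast Nat.cast_ne_zero.2 hN.ne'
      have : (N : ℂ) * (2 * Real.pi * m / N * Complex.I) = (m : ℤ) * (2 * Real.pi * Complex.I) := by
        field_simp
      rw [this, Complex.exp_int_mul_two_pi_mul_I]
    rw [this]
    simp

/-- `2 - 2cos(kθ) ≤ k²δ²` where `δ = min θ (2π − θ)`. -/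
lemma two_sub_cos_le (θ : ℝ) (h0 : 0 ≤ θ) (h2 : θ ≤ 2 * Real.pi) (k : ℕ) :
    2 - 2 * Real.cos (k * θ) ≤ (k : ℝ) ^ 2 * (min θ (2 * Real.pi - θ)) ^ 2 := by
  have base : ∀ x : ℝ, 2 - 2 * Real.cos x ≤ x ^ 2 := by
    intro x
    have := Real.one_sub_sq_div_two_le_cos (x := x)
    linarith
  have b1 : 2 - 2 * Real.cos (k * θ) ≤ (k * θ) ^ 2 := base _
  have b2 : 2 - 2 * Real.cos (k * θ) ≤ ((k : ℝ) * (θ - 2 * Real.pi)) ^ 2 := by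
    have hper : Real.cos ((k : ℝ) * (θ - 2 * Real.pi) + (k : ℤ) * (2 * Real.pi))
        = Real.cos ((k : ℝ) * (θ - 2 * Real.pi)) := Real.cos_add_int_mul_two_pi _ _
    have harg : (k : ℝ) * (θ - 2 * Real.pi) + (k : ℤ) * (2 * Real.pi) = k * θ := by
      push_cast
      ring
    rw [harg] at hper
    rw [hper]
    exact base _
  rcases le_total θ (2 * Real.pi - θ) with hle | hle
  · rw [min_eq_left hle]
    calc 2 - 2 * Real.cos (k * θ) ≤ (k * θ) ^ 2 := b1
    _ = (k:ℝ)^2 * θ^2 := by ring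
  · rw [min_eq_right hle]
    calc 2 - 2 * Real.cos (k * θ) ≤ ((k : ℝ) * (θ - 2 * Real.pi)) ^ 2 := b2
    _ = (k:ℝ)^2 * (2 * Real.pi - θ)^2 := by ring

lemma inv_sq_tail (m : ℕ) (hm : 1 ≤ m) (K : ℕ) :
    ∑ k ∈ Finset.Icc (m + 1) K, (1 : ℝ) / (k : ℝ) ^ 2 ≤ 1 / m := by
  rcases le_or_gt K m with h | h
  · rw [Finset.Icc_eq_empty (by omega)]
    simp [Nat.one_le_iff_ne_zero.1 hm]
  · have main : ∀ K, m ≤ K → ∑ k ∈ Finset.Icc (m + 1) K, (1 : ℝ) / (k : ℝ) ^ 2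
        ≤ 1 / m - 1 / K := by
      intro K
      induction K with
      | zero => intro h0; omega
      | succ n ih =>
        intro hmn
        rcases eq_or_lt_of_le hmn with heq | hlt
        · rw [← heq]
          rw [Finset.Icc_eq_empty (by omega)]
          simp
        · have hmn' : m ≤ n := by omega
          rw [Finset.sum_Icc_succ_top (by omega : m + 1 ≤ n + 1)]
          have hn0 : (0:ℝ) < n := by
            have : 1 ≤ n := by omega
            exact_mod_cast Nat.lt_of_lt_of_le Nat.zero_lt_one this
          have hn1 : (0:ℝ) < (n:ℝ) + 1 := by linarith
          have step : (1:ℝ) / ((n+1 : ℕ) : ℝ) ^ 2 ≤ 1 / n - 1 / ((n:ℝ)+1) := by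
            push_cast
            rw [div_sub_div _ _ (ne_of_gt hn0) (ne_of_gt hn1)]
            rw [div_le_div_iff₀ (by positivity) (by positivity)]
            ring_nf
            nlinarith
          have := ih hmn'
          push_cast at step ⊢
          linarith
    have h1 := main K (by omega)
    have hK : (0:ℝ) < K := by exact_mod_cast Nat.lt_of_lt_of_le (Nat.lt_of_le_of_lt (Nat.zero_le m) h) (le_refl K)
    have : (0:ℝ) ≤ 1 / K := by positivity
    linarith

/-- The weight bound: `∑_{k=1}^K (2 − 2cos kθ)/k² ≤ 9 δ`. -/
lemma weight_sum_le (θ : ℝ) (h0 : 0 ≤ θ) (h2 : θ ≤ 2 * Real.pi) (K : ℕ) :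
    ∑ k ∈ Finset.Icc 1 K, (2 - 2 * Real.cos (k * θ)) / (k : ℝ) ^ 2
      ≤ 9 * min θ (2 * Real.pi - θ) := by
  set δ := min θ (2 * Real.pi - θ) with hδdef
  have hδ0 : 0 ≤ δ := le_min h0 (by linarith)
  have hδπ : δ ≤ Real.pi := by
    rcases le_total θ Real.pi with h | h
    · exact (min_le_left _ _).trans h
    · exact (min_le_right _ _).trans (by linarith)
  rcases eq_or_lt_of_le hδ0 with hδz | hδpos
  · -- δ = 0 : θ = 0 or θ = 2π, all cosines are 1
    have hcos : ∀ k : ℕ, Real.cos (k * θ) = 1 := by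
      intro k
      rcases min_eq_iff.1 hδz.symm with ⟨h, _⟩ | ⟨h, _⟩
      · rw [h]; simp
      · have : θ = 2 * Real.pi := by linarith
        rw [this]
        have : (k:ℝ) * (2 * Real.pi) = (k:ℤ) * (2*Real.pi) + 0 := by push_cast; ring
        rw [this, add_comm, Real.cos_add_int_mul_two_pi]
        simp
    rw [← hδz]
    rw [Finset.sum_eq_zero]
    · simp
    · intro k _
      rw [hcos k]
      simp
  · -- main case
    set m := Nat.ceil (1/δ) with hmdef
    have hm1 : 1 ≤ m := by
      rw [hmdef]
      have : (0:ℝ) < 1/δ := by positivity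
      exact Nat.one_le_ceil_iff.2 this
    have hmδ : 1/δ ≤ (m:ℝ) := Nat.le_ceil _
    have hminv : 1/(m:ℝ) ≤ δ := by
      rw [div_le_iff₀ (by exact_mod_cast Nat.lt_of_lt_of_le Nat.zero_lt_one hm1)]
      rw [div_le_iff₀ hδpos] at hmδ
      linarith [mul_comm δ (m:ℝ)]
    have hmub : (m:ℝ) ≤ 1/δ + 1 := le_of_lt (Nat.ceil_lt_add_one (by positivity))
    have termle : ∀ k ∈ Finset.Icc 1 K, (2 - 2 * Real.cos (k * θ)) / (k : ℝ) ^ 2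
        ≤ if k ≤ m then δ^2 else 4 / (k:ℝ)^2 := by
      intro k hk
      have hk1 : 1 ≤ k := (Finset.mem_Icc.1 hk).1
      have hkR : (0:ℝ) < (k:ℝ) := by exact_mod_cast hk1
      split_ifs with hkm
      · rw [div_le_iff₀ (by positivity)]
        calc 2 - 2 * Real.cos (k * θ) ≤ (k:ℝ)^2 * δ^2 := two_sub_cos_le θ h0 h2 k
        _ = δ^2 * (k:ℝ)^2 := by ring
      · apply div_le_div_of_nonneg_right ?_ (by positivity)
        · have := Real.neg_one_le_cos (k * θ)
          linarith
    calc ∑ k ∈ Finset.Icc 1 K, (2 - 2 * Real.cos (k * θ)) / (k : ℝ) ^ 2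
        ≤ ∑ k ∈ Finset.Icc 1 K, (if k ≤ m then δ^2 else 4 / (k:ℝ)^2) :=
          Finset.sum_le_sum termle
      _ ≤ 9 * δ := by
          rw [← Finset.sum_filter_add_sum_filter_not (Finset.Icc 1 K) (· ≤ m)]
          have e1 : ∑ k ∈ (Finset.Icc 1 K).filter (· ≤ m), (if k ≤ m then δ^2 else 4/(k:ℝ)^2)
              = ∑ k ∈ (Finset.Icc 1 K).filter (· ≤ m), δ^2 := by
            apply Finset.sum_congr rfl
            intro k hk
            rw [if_pos (Finset.mem_filter.1 hk).2]
          have e2 : ∑ k ∈ (Finset.Icc 1 K).filter (¬ · ≤ m), (if k ≤ m then δ^2 else 4/(k:ℝ)^2)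
              = ∑ k ∈ (Finset.Icc 1 K).filter (¬ · ≤ m), 4/(k:ℝ)^2 := by
            apply Finset.sum_congr rfl
            intro k hk
            rw [if_neg (Finset.mem_filter.1 hk).2]
          rw [e1, e2]
          have b1 : ∑ k ∈ (Finset.Icc 1 K).filter (· ≤ m), δ^2 ≤ m * δ^2 := by
            rw [Finset.sum_const, nsmul_eq_mul]
            have : ((Finset.Icc 1 K).filter (· ≤ m)).card ≤ m := by
              have hsub : (Finset.Icc 1 K).filter (· ≤ m) ⊆ Finset.Icc 1 m := by
                intro k hk
                rw [Finset.mem_Icc]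
                have := Finset.mem_filter.1 hk
                exact ⟨(Finset.mem_Icc.1 this.1).1, this.2⟩
              calc _ ≤ (Finset.Icc 1 m).card := Finset.card_le_card hsub
                _ = m := by rw [Nat.card_Icc]; omega
            have hδ2 : (0:ℝ) ≤ δ^2 := sq_nonneg δ
            calc (((Finset.Icc 1 K).filter (· ≤ m)).card : ℝ) * δ^2
                ≤ (m:ℝ) * δ^2 := by
                  apply mul_le_mul_of_nonneg_right _ hδ2
                  exact_mod_cast this
              _ = m * δ^2 := rfl
          have b2 : ∑ k ∈ (Finset.Icc 1 K).filter (¬ · ≤ m), 4/(k:ℝ)^2 ≤ 4 / (m:ℝ) := by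
            have heq : (Finset.Icc 1 K).filter (¬ · ≤ m) = Finset.Icc (m+1) K := by
              ext k
              simp only [Finset.mem_filter, Finset.mem_Icc, not_le]
              omega
            rw [heq]
            have : ∑ k ∈ Finset.Icc (m+1) K, 4/(k:ℝ)^2
                = 4 * ∑ k ∈ Finset.Icc (m+1) K, 1/(k:ℝ)^2 := by
              rw [Finset.mul_sum]
              apply Finset.sum_congr rfl
              intro k _
              ring
            rw [this]
            have := inv_sq_tail m hm1 K
            calc 4 * ∑ k ∈ Finset.Icc (m+1) K, 1/(k:ℝ)^2 ≤ 4 * (1/(m:ℝ)) := by linarith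
              _ = 4 / (m:ℝ) := by ring
          have hπ : δ ≤ Real.pi := hδπ
          have hpi : Real.pi ≤ 4 := by linarith [Real.pi_le_four]
          have hmδ2 : (m:ℝ) * δ^2 ≤ δ + δ^2 := by
            have : (m:ℝ) * δ^2 ≤ (1/δ + 1) * δ^2 := by
              apply mul_le_mul_of_nonneg_right hmub (sq_nonneg δ)
            calc (m:ℝ) * δ^2 ≤ (1/δ + 1) * δ^2 := this
              _ = δ + δ^2 := by field_simp
          have h4m : 4 / (m:ℝ) ≤ 4 * δ := by
            have he : 4 / (m:ℝ) = 4 * (1/(m:ℝ)) := by ring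
            rw [he]
            linarith
          have hδ2 : δ^2 ≤ 4 * δ := by nlinarith
          linarith
  
/-- Lower bound: `δ/π ≤ (1 − cos θ) + |sin θ|`. -/
lemma jordan_lower (θ : ℝ) (h0 : 0 ≤ θ) (h2 : θ ≤ 2 * Real.pi) :
    min θ (2 * Real.pi - θ) / Real.pi ≤ (1 - Real.cos θ) + |Real.sin θ| := by
  have hπ := Real.pi_pos
  have hc := Real.cos_le_one θ
  rcases le_total θ (Real.pi/2) with h1 | h1
  · have hs := Real.mul_le_sin h0 h1
    have habs : |Real.sin θ| = Real.sin θ := abs_of_nonneg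
      (Real.sin_nonneg_of_nonneg_of_le_pi h0 (by linarith))
    have hmin : min θ (2 * Real.pi - θ) ≤ θ := min_le_left _ _
    rw [habs]
    have h2θ : 2 / Real.pi * θ * Real.pi = 2 * θ := by field_simp
    have hmul := mul_le_mul_of_nonneg_right hs hπ.le
    have : θ / Real.pi ≤ Real.sin θ := by
      rw [div_le_iff₀ hπ]
      nlinarith
    have hdiv : min θ (2 * Real.pi - θ) / Real.pi ≤ θ / Real.pi :=
      div_le_div_of_nonneg_right hmin hπ.le
    linarith
  · rcases le_total θ (3 * Real.pi / 2) with h3 | h3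
    · have hcos : Real.cos θ ≤ 0 :=
        Real.cos_nonpos_of_pi_div_two_le_of_le h1 (by linarith)
      have hmin : min θ (2 * Real.pi - θ) ≤ Real.pi := by
        rcases le_total θ Real.pi with h | h
        · exact (min_le_left _ _).trans h
        · exact (min_le_right _ _).trans (by linarith)
      have : min θ (2 * Real.pi - θ) / Real.pi ≤ 1 := by
        rw [div_le_one hπ]; exact hmin
      have habs : 0 ≤ |Real.sin θ| := abs_nonneg _
      linarith
    · -- 3π/2 ≤ θ ≤ 2π
      set x := 2 * Real.pi - θ with hx
      have hx0 : 0 ≤ x := by linarith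
      have hx1 : x ≤ Real.pi / 2 := by linarith
      have hs := Real.mul_le_sin hx0 hx1
      have hsin : Real.sin θ = - Real.sin x := by
        rw [hx]
        rw [show 2 * Real.pi - θ = -(θ - 2*Real.pi) by ring, Real.sin_neg]
        rw [show θ - 2*Real.pi = θ + (-1 : ℤ) * (2*Real.pi) by push_cast; ring]
        rw [Real.sin_add_int_mul_two_pi]
        ring
      have habs : |Real.sin θ| = Real.sin x := by
        rw [hsin, abs_neg, abs_of_nonneg (Real.sin_nonneg_of_nonneg_of_le_pi hx0 (by linarith))]
      have hmin : min θ (2 * Real.pi - θ) ≤ x := min_le_right _ _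
      rw [habs]
      have h2x : 2 / Real.pi * x * Real.pi = 2 * x := by field_simp
      have hmul := mul_le_mul_of_nonneg_right hs hπ.le
      have : x / Real.pi ≤ Real.sin x := by
        rw [div_le_iff₀ hπ]
        nlinarith
      have hdiv : min θ (2 * Real.pi - θ) / Real.pi ≤ x / Real.pi :=
        div_le_div_of_nonneg_right hmin hπ.le
      linarith

end HeisAux


namespace HeisAux

open scoped BigOperators RealInnerProductSpace
open Finset

set_option linter.unusedSectionVars false

variable {H : Type*} [NormedAddCommGroup H] [InnerProductSpace ℝ H]

/-- Windowed Fourier transform of `f : ℤ → H` at frequency `θ`, as a pair (cos-part, sin-part). -/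
noncomputable def four (θ : ℝ) (W : Finset ℤ) (f : ℤ → H) : WithLp 2 (H × H) :=
  pair (∑ z ∈ W, Real.cos (θ * z) • f z) (∑ z ∈ W, Real.sin (θ * z) • f z)

@[simp] lemma four_fst (θ : ℝ) (W : Finset ℤ) (f : ℤ → H) :
    (four θ W f).fst = ∑ z ∈ W, Real.cos (θ * z) • f z := rfl
@[simp] lemma four_snd (θ : ℝ) (W : Finset ℤ) (f : ℤ → H) :
    (four θ W f).snd = ∑ z ∈ W, Real.sin (θ * z) • f z := rfl

lemma four_sub (θ : ℝ) (W : Finset ℤ) (f g : ℤ → H) :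
    four θ W (fun z => f z - g z) = four θ W f - four θ W g := by
  refine Kext ?_ ?_ <;>
    simp [four, smul_sub, Finset.sum_sub_distrib, WithLp.sub_fst, WithLp.sub_snd]

/-- Shifting `f` corresponds to rotating its Fourier transform. -/
lemma four_shift (θ : ℝ) (L M k : ℤ) (f : ℤ → H) (hsupp : ∀ z, f z ≠ 0 → |z| ≤ M)
    (hk : M + |k| ≤ L) :
    four θ (Finset.Icc (-L) L) (fun z => f (z + k)) =
      rot ((k : ℝ) * θ) (four θ (Finset.Icc (-L) L) f) := by
  have hmem : ∀ z : ℤ, f z ≠ 0 → z ∈ Finset.Icc (-L) L ∧ z - k ∈ Finset.Icc (-L) L := by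
    intro z hz
    have h1 := hsupp z hz
    have h2 : |z - k| ≤ M + |k| := by
      have h3 := abs_add_le z (-k)
      rw [← sub_eq_add_neg, abs_neg] at h3
      linarith
    have hk' := abs_nonneg k
    constructor <;> rw [Finset.mem_Icc] <;> rw [abs_le] at h1 h2 <;>
      constructor <;> linarith [h1.1, h1.2, h2.1, h2.2]
  have ecos : ∑ z ∈ Finset.Icc (-L) L, Real.cos (θ * z) • f (z + k)
      = ∑ z ∈ Finset.Icc (-L) L, Real.cos (θ * ((z : ℝ) - (k : ℝ))) • f z := by
    have h := sum_shift (fun z : ℤ => Real.cos (θ * ((z : ℝ) - (k : ℝ))) • f z)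
      (Finset.Icc (-L) L) k (fun z hz => hmem z (by intro hf; apply hz; simp [hf]))
    rw [← h]
    refine Finset.sum_congr rfl fun z _ => ?_
    congr 2
    push_cast
    ring
  have esin : ∑ z ∈ Finset.Icc (-L) L, Real.sin (θ * z) • f (z + k)
      = ∑ z ∈ Finset.Icc (-L) L, Real.sin (θ * ((z : ℝ) - (k : ℝ))) • f z := by
    have h := sum_shift (fun z : ℤ => Real.sin (θ * ((z : ℝ) - (k : ℝ))) • f z)
      (Finset.Icc (-L) L) k (fun z hz => hmem z (by intro hf; apply hz; simp [hf]))
    rw [← h]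
    refine Finset.sum_congr rfl fun z _ => ?_
    congr 2
    push_cast
    ring
  refine Kext ?_ ?_
  · simp only [four_fst, rot_fst, four_snd, ecos]
    rw [Finset.smul_sum, Finset.smul_sum, ← Finset.sum_add_distrib]
    refine Finset.sum_congr rfl fun z _ => ?_
    have harg : θ * ((z : ℝ) - (k : ℝ)) = θ * z - (k : ℝ) * θ := by ring
    rw [harg, Real.cos_sub, smul_smul, smul_smul, ← add_smul]
    congr 1
    ring
  · simp only [four_fst, rot_snd, four_snd, esin]
    rw [Finset.smul_sum, Finset.smul_sum, ← Finset.sum_add_distrib]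
    refine Finset.sum_congr rfl fun z _ => ?_
    have harg : θ * ((z : ℝ) - (k : ℝ)) = θ * z - (k : ℝ) * θ := by ring
    rw [harg, Real.sin_sub, smul_smul, smul_smul, ← add_smul]
    congr 1
    ring

lemma norm_four_sq (θ : ℝ) (W : Finset ℤ) (f : ℤ → H) :
    ‖four θ W f‖ ^ 2 = ∑ z ∈ W, ∑ z' ∈ W, Real.cos (θ * z - θ * z') * ⟪f z, f z'⟫ := by
  rw [norm_sq_expand, four_fst, four_snd]
  rw [← real_inner_self_eq_norm_sq, ← real_inner_self_eq_norm_sq]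
  rw [sum_inner, sum_inner]
  rw [← Finset.sum_add_distrib]
  refine Finset.sum_congr rfl fun z _ => ?_
  rw [inner_sum, inner_sum, ← Finset.sum_add_distrib]
  refine Finset.sum_congr rfl fun z' _ => ?_
  rw [real_inner_smul_left, real_inner_smul_right, real_inner_smul_left, real_inner_smul_right,
    Real.cos_sub]
  ring

/-- Parseval's identity for the windowed discrete Fourier transform. -/
lemma parseval (N : ℕ) (hN : 0 < N) (L : ℤ) (h2L : 2 * L < (N : ℤ)) (f : ℤ → H)
    (hsupp : ∀ z, f z ≠ 0 → |z| ≤ L) :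
    ∑ j ∈ Finset.range N, ‖four (2 * Real.pi * j / N) (Finset.Icc (-L) L) f‖ ^ 2
      = N * ∑ z ∈ Finset.Icc (-L) L, ‖f z‖ ^ 2 := by
  calc ∑ j ∈ Finset.range N, ‖four (2 * Real.pi * j / N) (Finset.Icc (-L) L) f‖ ^ 2
      = ∑ j ∈ Finset.range N, ∑ z ∈ Finset.Icc (-L) L, ∑ z' ∈ Finset.Icc (-L) L,
          Real.cos (2 * Real.pi * j / N * ((z - z' : ℤ) : ℝ)) * ⟪f z, f z'⟫ := by
        refine Finset.sum_congr rfl fun j _ => ?_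
        rw [norm_four_sq]
        refine Finset.sum_congr rfl fun z _ => Finset.sum_congr rfl fun z' _ => ?_
        congr 2
        push_cast
        ring
    _ = ∑ z ∈ Finset.Icc (-L) L, ∑ z' ∈ Finset.Icc (-L) L,
          (∑ j ∈ Finset.range N,
            Real.cos (2 * Real.pi * j / N * ((z - z' : ℤ) : ℝ))) * ⟪f z, f z'⟫ := by
        rw [Finset.sum_comm]
        refine Finset.sum_congr rfl fun z _ => ?_
        rw [Finset.sum_comm]
        refine Finset.sum_congr rfl fun z' _ => ?_
        rw [Finset.sum_mul]
    _ = ∑ z ∈ Finset.Icc (-L) L, ∑ z' ∈ Finset.Icc (-L) L,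
          (if (N : ℤ) ∣ (z - z') then (N : ℝ) else 0) * ⟪f z, f z'⟫ := by
        refine Finset.sum_congr rfl fun z _ => Finset.sum_congr rfl fun z' _ => ?_
        rw [cos_sum_eq N hN (z - z')]
    _ = ∑ z ∈ Finset.Icc (-L) L, (N : ℝ) * ‖f z‖ ^ 2 := by
        refine Finset.sum_congr rfl fun z hz => ?_
        rw [Finset.sum_eq_single_of_mem z hz]
        · rw [if_pos (by simp), real_inner_self_eq_norm_sq]
        · intro z' hz' hne
          rw [if_neg, zero_mul]
          intro hdvd
          have h1 : z - z' ≠ 0 := sub_ne_zero.2 (fun h => hne h.symm)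
          have habs : (N : ℤ) ≤ |z - z'| := Int.le_of_dvd (abs_pos.2 h1) ((dvd_abs _ _).2 hdvd)
          rw [Finset.mem_Icc] at hz hz'
          rcases abs_cases (z - z') with ⟨he, _⟩ | ⟨he, _⟩ <;> rw [he] at habs <;> omega
    _ = N * ∑ z ∈ Finset.Icc (-L) L, ‖f z‖ ^ 2 := by
        rw [Finset.mul_sum]

end HeisAux


namespace HeisAux

open scoped BigOperators RealInnerProductSpace
open Finset

set_option linter.unusedSectionVars false
set_option maxHeartbeats 1000000

variable {H : Type*} [NormedAddCommGroup H] [InnerProductSpace ℝ H]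

section Core

variable (F Z : ℤ × ℤ → WithLp 2 (H × H)) (Ω : Finset (ℤ × ℤ)) (θ : ℝ)

/-- Bound on the commutator pairing `⟨(UV − VU)F, Z⟩`. -/
lemma pairing_bound
    (hPin : ∀ p w : ℤ × ℤ, |w.1| ≤ 1 → |w.2| ≤ 1 → F (p + w) ≠ 0 →
      ∀ v : ℤ × ℤ, |v.1| ≤ 1 → |v.2| ≤ 1 → p - v ∈ Ω)
    (hZF : ∀ p, Z p ≠ 0 → F p ≠ 0)
    (hZa : ∑ p ∈ Ω, ‖Z (p + (1,0)) - Z p‖ ^ 2 = ∑ p ∈ Ω, ‖F (p + (1,0)) - F p‖ ^ 2)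
    (hZb : ∑ p ∈ Ω, ‖rot ((p.1 : ℝ) * θ) (Z (p + (0,1))) - Z p‖ ^ 2
      = ∑ p ∈ Ω, ‖rot ((p.1 : ℝ) * θ) (F (p + (0,1))) - F p‖ ^ 2) :
    |∑ p ∈ Ω, ⟪rot θ (rot ((p.1 : ℝ) * θ) (F (p + (1,1))))
        - rot ((p.1 : ℝ) * θ) (F (p + (1,1))), Z p⟫|
      ≤ 2 * Real.sqrt (∑ p ∈ Ω, ‖F (p + (1,0)) - F p‖ ^ 2)
          * Real.sqrt (∑ p ∈ Ω, ‖rot ((p.1 : ℝ) * θ) (F (p + (0,1))) - F p‖ ^ 2) := by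
  set X : ℤ × ℤ → WithLp 2 (H × H) := fun p => rot ((p.1 : ℝ) * θ) (F (p + (0,1))) - F p
    with hXdef
  set Y : ℤ × ℤ → WithLp 2 (H × H) := fun p => F (p + (1,0)) - F p with hYdef
  have hXsupp : ∀ p, X p ≠ 0 → (F (p + (0,1)) ≠ 0 ∨ F p ≠ 0) := by
    intro p hX
    by_contra hcon
    push_neg at hcon
    apply hX
    simp only [hXdef, hcon.1, hcon.2, rot_zero', sub_zero]
  have hYsupp : ∀ p, Y p ≠ 0 → (F (p + (1,0)) ≠ 0 ∨ F p ≠ 0) := by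
    intro p hY
    by_contra hcon
    push_neg at hcon
    apply hY
    simp only [hYdef, hcon.1, hcon.2, sub_zero]
  have habs1 : |(1 : ℤ)| ≤ 1 := by decide
  have habs0 : |(0 : ℤ)| ≤ 1 := by decide
  -- support membership helpers
  have hXΩ : ∀ p, X p ≠ 0 → ∀ v : ℤ × ℤ, |v.1| ≤ 1 → |v.2| ≤ 1 → p - v ∈ Ω := by
    intro p hX v hv1 hv2
    rcases hXsupp p hX with h | h
    · exact hPin p (0,1) habs0 habs1 h v hv1 hv2
    · exact hPin p (0,0) habs0 habs0 (by simpa [Prod.mk_zero_zero] using h) v hv1 hv2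
  have hYΩ : ∀ p, Y p ≠ 0 → ∀ v : ℤ × ℤ, |v.1| ≤ 1 → |v.2| ≤ 1 → p - v ∈ Ω := by
    intro p hY v hv1 hv2
    rcases hYsupp p hY with h | h
    · exact hPin p (1,0) habs1 habs0 h v hv1 hv2
    · exact hPin p (0,0) habs0 habs0 (by simpa [Prod.mk_zero_zero] using h) v hv1 hv2
  have hZΩ : ∀ p, Z p ≠ 0 → ∀ v : ℤ × ℤ, |v.1| ≤ 1 → |v.2| ≤ 1 → p - v ∈ Ω := by
    intro p hZ v hv1 hv2
    exact hPin p (0,0) habs0 habs0 (by simpa [Prod.mk_zero_zero] using hZF p hZ) v hv1 hv2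
  -- Step A : pointwise commutator identity
  have stepA : ∀ p : ℤ × ℤ,
      rot θ (rot ((p.1 : ℝ) * θ) (F (p + (1,1)))) - rot ((p.1 : ℝ) * θ) (F (p + (1,1)))
        = (X (p + (1,0)) - X p) - (rot ((p.1 : ℝ) * θ) (Y (p + (0,1))) - Y p) := by
    intro p
    have hc : (((p + ((1 : ℤ),(0 : ℤ))).1 : ℝ)) * θ = θ + (p.1 : ℝ) * θ := by
      simp only [Prod.fst_add]
      push_cast
      ring
    have e1 : p + (1,0) + (0,1) = p + (1,1) := by
      rw [add_assoc, Prod.mk_add_mk]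
      norm_num [Prod.ext_iff]
    have e2 : p + (0,1) + (1,0) = p + (1,1) := by
      rw [add_assoc, Prod.mk_add_mk]
      norm_num [Prod.ext_iff]
    have e3 : (p + ((0:ℤ),(1:ℤ))).1 = p.1 := by
      simp
    simp only [hXdef, hYdef, e1, e2, e3, rot_sub, hc]
    rw [rot_rot]
    abel
  -- Step B : the `U`-commutator part
  have reB : ∑ p ∈ Ω, ⟪X (p + (1,0)), Z p⟫ = ∑ p ∈ Ω, ⟪X p, Z (p - (1,0))⟫ := by
    have h := sum_shift (fun p : ℤ × ℤ => (⟪X p, Z (p - (1,0))⟫ : ℝ)) Ω (1,0)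
      (by
        intro p hg
        have hX : X p ≠ 0 := by
          intro h0
          apply hg
          simp [h0]
        exact ⟨by simpa [Prod.mk_zero_zero] using hXΩ p hX (0,0) habs0 habs0, hXΩ p hX (1,0) habs1 habs0⟩)
    rw [← h]
    refine Finset.sum_congr rfl fun p _ => ?_
    congr 1
    simp [add_sub_cancel_right]
  have stepB : |∑ p ∈ Ω, ⟪X (p + (1,0)) - X p, Z p⟫|
      ≤ Real.sqrt (∑ p ∈ Ω, ‖X p‖ ^ 2) * Real.sqrt (∑ p ∈ Ω, ‖Z (p - (1,0)) - Z p‖ ^ 2) := by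
    have e : ∑ p ∈ Ω, ⟪X (p + (1,0)) - X p, Z p⟫
        = ∑ p ∈ Ω, ⟪X p, Z (p - (1,0)) - Z p⟫ := by
      simp only [inner_sub_left, inner_sub_right]
      rw [Finset.sum_sub_distrib, Finset.sum_sub_distrib, reB]
    rw [e]
    exact sum_inner_le Ω X (fun p => Z (p - (1,0)) - Z p)
  -- Step C : the `V`-commutator part
  have reC : ∑ p ∈ Ω, ⟪rot ((p.1 : ℝ) * θ) (Y (p + (0,1))), Z p⟫
      = ∑ p ∈ Ω, ⟪Y p, rot (-((p.1 : ℝ) * θ)) (Z (p - (0,1)))⟫ := by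
    have h := sum_shift (fun p : ℤ × ℤ =>
        (⟪Y p, rot (-((p.1 : ℝ) * θ)) (Z (p - (0,1)))⟫ : ℝ)) Ω (0,1)
      (by
        intro p hg
        have hY : Y p ≠ 0 := by
          intro h0
          apply hg
          simp [h0]
        exact ⟨by simpa [Prod.mk_zero_zero] using hYΩ p hY (0,0) habs0 habs0, hYΩ p hY (0,1) habs0 habs1⟩)
    rw [← h]
    refine Finset.sum_congr rfl fun p _ => ?_
    rw [inner_rot_left]
    congr 2
    · simp
    · simp
  have stepC : |∑ p ∈ Ω, ⟪rot ((p.1 : ℝ) * θ) (Y (p + (0,1))) - Y p, Z p⟫|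
      ≤ Real.sqrt (∑ p ∈ Ω, ‖Y p‖ ^ 2)
        * Real.sqrt (∑ p ∈ Ω, ‖rot (-((p.1 : ℝ) * θ)) (Z (p - (0,1))) - Z p‖ ^ 2) := by
    have e : ∑ p ∈ Ω, ⟪rot ((p.1 : ℝ) * θ) (Y (p + (0,1))) - Y p, Z p⟫
        = ∑ p ∈ Ω, ⟪Y p, rot (-((p.1 : ℝ) * θ)) (Z (p - (0,1))) - Z p⟫ := by
      simp only [inner_sub_left, inner_sub_right]
      rw [Finset.sum_sub_distrib, Finset.sum_sub_distrib, reC]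
    rw [e]
    exact sum_inner_le Ω Y _
  -- norm identifications
  have normZa : ∑ p ∈ Ω, ‖Z (p - (1,0)) - Z p‖ ^ 2 = ∑ p ∈ Ω, ‖F (p + (1,0)) - F p‖ ^ 2 := by
    rw [← hZa]
    have h := sum_shift (fun p : ℤ × ℤ => ‖Z (p - (1,0)) - Z p‖ ^ 2) Ω (1,0)
      (by
        intro p hg
        have : Z p ≠ 0 ∨ Z (p - (1,0)) ≠ 0 := by
          by_contra hcon
          push_neg at hcon
          apply hg
          simp [hcon.1, hcon.2]
        rcases this with h | h
        · exact ⟨by simpa [Prod.mk_zero_zero] using hZΩ p h (0,0) habs0 habs0, hZΩ p h (1,0) habs1 habs0⟩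
        · have h1 := hZΩ (p - (1,0)) h
          constructor
          · have := h1 (-1,0) (by decide) habs0
            simpa [sub_sub, sub_neg_eq_add, Prod.mk_zero_zero] using this
          · simpa [Prod.mk_zero_zero] using h1 (0,0) habs0 habs0
        )
    rw [← h]
    refine Finset.sum_congr rfl fun p _ => ?_
    simp only [add_sub_cancel_right]
    rw [norm_sub_rev]
  have normZb : ∑ p ∈ Ω, ‖rot (-((p.1 : ℝ) * θ)) (Z (p - (0,1))) - Z p‖ ^ 2
      = ∑ p ∈ Ω, ‖rot ((p.1 : ℝ) * θ) (F (p + (0,1))) - F p‖ ^ 2 := by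
    rw [← hZb]
    have point : ∀ p : ℤ × ℤ, ‖rot (-((p.1 : ℝ) * θ)) (Z (p - (0,1))) - Z p‖ ^ 2
        = ‖Z (p - (0,1)) - rot ((p.1 : ℝ) * θ) (Z p)‖ ^ 2 := by
      intro p
      rw [← norm_rot ((p.1 : ℝ) * θ) (rot (-((p.1 : ℝ) * θ)) (Z (p - (0,1))) - Z p),
        rot_sub, rot_rot]
      norm_num
    have h := sum_shift (fun p : ℤ × ℤ =>
        ‖Z (p - (0,1)) - rot ((p.1 : ℝ) * θ) (Z p)‖ ^ 2) Ω (0,1)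
      (by
        intro p hg
        have : Z (p - (0,1)) ≠ 0 ∨ Z p ≠ 0 := by
          by_contra hcon
          push_neg at hcon
          apply hg
          simp [hcon.1, hcon.2]
        rcases this with h | h
        · have h1 := hZΩ (p - (0,1)) h
          constructor
          · have := h1 (0,-1) habs0 (by decide)
            simpa [sub_sub, sub_neg_eq_add, Prod.mk_zero_zero] using this
          · simpa [Prod.mk_zero_zero] using h1 (0,0) habs0 habs0
        · exact ⟨by simpa [Prod.mk_zero_zero] using hZΩ p h (0,0) habs0 habs0, hZΩ p h (0,1) habs0 habs1⟩)
    calc ∑ p ∈ Ω, ‖rot (-((p.1 : ℝ) * θ)) (Z (p - (0,1))) - Z p‖ ^ 2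
        = ∑ p ∈ Ω, ‖Z (p - (0,1)) - rot ((p.1 : ℝ) * θ) (Z p)‖ ^ 2 :=
          Finset.sum_congr rfl fun p _ => point p
      _ = ∑ p ∈ Ω, (fun p : ℤ × ℤ =>
            ‖Z (p - (0,1)) - rot ((p.1 : ℝ) * θ) (Z p)‖ ^ 2) (p + (0,1)) := by
          rw [h]
      _ = ∑ p ∈ Ω, ‖rot ((p.1 : ℝ) * θ) (Z (p + (0,1))) - Z p‖ ^ 2 := by
          refine Finset.sum_congr rfl fun p _ => ?_
          simp only [add_sub_cancel_right, Prod.fst_add]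
          rw [norm_sub_rev]
          norm_num
  -- assemble
  have main : ∑ p ∈ Ω, ⟪rot θ (rot ((p.1 : ℝ) * θ) (F (p + (1,1))))
      - rot ((p.1 : ℝ) * θ) (F (p + (1,1))), Z p⟫
      = (∑ p ∈ Ω, ⟪X (p + (1,0)) - X p, Z p⟫)
        - ∑ p ∈ Ω, ⟪rot ((p.1 : ℝ) * θ) (Y (p + (0,1))) - Y p, Z p⟫ := by
    rw [← Finset.sum_sub_distrib]
    refine Finset.sum_congr rfl fun p _ => ?_
    rw [stepA p, inner_sub_left]
  rw [main]
  have hb2 : ∑ p ∈ Ω, ‖X p‖ ^ 2 = ∑ p ∈ Ω, ‖rot ((p.1 : ℝ) * θ) (F (p + (0,1))) - F p‖ ^ 2 := rfl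
  have ha2 : ∑ p ∈ Ω, ‖Y p‖ ^ 2 = ∑ p ∈ Ω, ‖F (p + (1,0)) - F p‖ ^ 2 := rfl
  calc |(∑ p ∈ Ω, ⟪X (p + (1,0)) - X p, Z p⟫)
      - ∑ p ∈ Ω, ⟪rot ((p.1 : ℝ) * θ) (Y (p + (0,1))) - Y p, Z p⟫|
      ≤ |∑ p ∈ Ω, ⟪X (p + (1,0)) - X p, Z p⟫|
        + |∑ p ∈ Ω, ⟪rot ((p.1 : ℝ) * θ) (Y (p + (0,1))) - Y p, Z p⟫| := abs_sub _ _
    _ ≤ Real.sqrt (∑ p ∈ Ω, ‖X p‖ ^ 2) * Real.sqrt (∑ p ∈ Ω, ‖Z (p - (1,0)) - Z p‖ ^ 2)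
        + Real.sqrt (∑ p ∈ Ω, ‖Y p‖ ^ 2)
          * Real.sqrt (∑ p ∈ Ω, ‖rot (-((p.1 : ℝ) * θ)) (Z (p - (0,1))) - Z p‖ ^ 2) :=
        add_le_add stepB stepC
    _ = 2 * Real.sqrt (∑ p ∈ Ω, ‖F (p + (1,0)) - F p‖ ^ 2)
          * Real.sqrt (∑ p ∈ Ω, ‖rot ((p.1 : ℝ) * θ) (F (p + (0,1))) - F p‖ ^ 2) := by
        rw [normZa, normZb, hb2, ha2]
        ring

lemma Jop_zero : Jop (0 : WithLp 2 (H × H)) = 0 :=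
  Kext (by simp [WithLp.zero_fst, WithLp.zero_snd]) (by simp [WithLp.zero_fst, WithLp.zero_snd])

/-- The uncertainty-principle core lemma. -/
lemma core_uncertainty (F : ℤ × ℤ → WithLp 2 (H × H)) (Ω : Finset (ℤ × ℤ)) (θ δ : ℝ)
    (hPin : ∀ p w : ℤ × ℤ, |w.1| ≤ 1 → |w.2| ≤ 1 → F (p + w) ≠ 0 →
      ∀ v : ℤ × ℤ, |v.1| ≤ 1 → |v.2| ≤ 1 → p - v ∈ Ω)
    (hδ0 : 0 ≤ δ) (hδπ : δ ≤ Real.pi)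
    (hA : δ / Real.pi ≤ (1 - Real.cos θ) + |Real.sin θ|)
    (hB : 2 - 2 * Real.cos θ ≤ δ ^ 2) :
    δ * ∑ p ∈ Ω, ‖F p‖ ^ 2 ≤ 32 * Real.pi ^ 3 *
      ((∑ p ∈ Ω, ‖F (p + (1,0)) - F p‖ ^ 2)
        + ∑ p ∈ Ω, ‖rot ((p.1 : ℝ) * θ) (F (p + (0,1))) - F p‖ ^ 2) := by
  have hπ := Real.pi_pos
  have hπ3 := Real.pi_gt_three
  set n := ∑ p ∈ Ω, ‖F p‖ ^ 2 with hn
  set a2 := ∑ p ∈ Ω, ‖F (p + (1,0)) - F p‖ ^ 2 with ha2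
  set b2 := ∑ p ∈ Ω, ‖rot ((p.1 : ℝ) * θ) (F (p + (0,1))) - F p‖ ^ 2 with hb2
  have hn0 : 0 ≤ n := Finset.sum_nonneg fun p _ => sq_nonneg _
  have ha20 : 0 ≤ a2 := Finset.sum_nonneg fun p _ => sq_nonneg _
  have hb20 : 0 ≤ b2 := Finset.sum_nonneg fun p _ => sq_nonneg _
  set a := Real.sqrt a2 with hadef
  set b := Real.sqrt b2 with hbdef
  set t := Real.sqrt n with htdef
  have ha : a ^ 2 = a2 := Real.sq_sqrt ha20
  have hb : b ^ 2 = b2 := Real.sq_sqrt hb20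
  have ht : t ^ 2 = n := Real.sq_sqrt hn0
  have ha0 : 0 ≤ a := Real.sqrt_nonneg _
  have hb0 : 0 ≤ b := Real.sqrt_nonneg _
  have ht0 : 0 ≤ t := Real.sqrt_nonneg _
  set G : ℤ × ℤ → WithLp 2 (H × H) := fun p => rot ((p.1 : ℝ) * θ) (F (p + (1,1))) with hGdef
  -- two pairing bounds
  have pbF : |∑ p ∈ Ω, ⟪rot θ (G p) - G p, F p⟫| ≤ 2 * a * b :=
    pairing_bound F F Ω θ hPin (fun p h => h) rfl rfl
  have pbJ : |∑ p ∈ Ω, ⟪rot θ (G p) - G p, Jop (F p)⟫| ≤ 2 * a * b := by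
    refine pairing_bound F (fun p => Jop (F p)) Ω θ hPin ?_ ?_ ?_
    · intro p h
      intro h0
      exact h (by simp [h0, Jop_zero])
    · refine Finset.sum_congr rfl fun p _ => ?_
      rw [← J_sub, norm_J]
    · refine Finset.sum_congr rfl fun p _ => ?_
      rw [← J_rot, ← J_sub, norm_J]
  -- the difference G - F is small
  have hGVF : ∑ p ∈ Ω, ‖G p - rot ((p.1 : ℝ) * θ) (F (p + (0,1)))‖ ^ 2 = a2 := by
    have h := sum_shift (fun p : ℤ × ℤ => ‖F (p + (1,0)) - F p‖ ^ 2) Ω (0,1)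
      (by
        intro p hg
        have habs1 : |(1 : ℤ)| ≤ 1 := by decide
        have habs0 : |(0 : ℤ)| ≤ 1 := by decide
        have hor : F (p + (1,0)) ≠ 0 ∨ F p ≠ 0 := by
          by_contra hcon
          push_neg at hcon
          apply hg
          simp [hcon.1, hcon.2]
        rcases hor with h | h
        · exact ⟨by simpa [Prod.mk_zero_zero] using hPin p (1,0) habs1 habs0 h (0,0) habs0 habs0,
            hPin p (1,0) habs1 habs0 h (0,1) habs0 habs1⟩
        · exact ⟨by simpa [Prod.mk_zero_zero] using hPin p (0,0) habs0 habs0 (by simpa [Prod.mk_zero_zero] using h) (0,0) habs0 habs0,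
            hPin p (0,0) habs0 habs0 (by simpa [Prod.mk_zero_zero] using h) (0,1) habs0 habs1⟩)
    rw [ha2, ← h]
    refine Finset.sum_congr rfl fun p _ => ?_
    have e2 : p + (0,1) + (1,0) = p + (1,1) := by
      rw [add_assoc, Prod.mk_add_mk]
      norm_num [Prod.ext_iff]
    rw [hGdef]
    simp only []
    rw [← rot_sub, ← e2]
    rw [norm_rot]
  have hW : ∑ p ∈ Ω, ‖G p - F p‖ ^ 2 ≤ (a + b) ^ 2 := by
    have h := sum_sq_add_le Ω (fun p => G p - rot ((p.1 : ℝ) * θ) (F (p + (0,1))))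
      (fun p => rot ((p.1 : ℝ) * θ) (F (p + (0,1))) - F p)
    have e : ∀ p ∈ Ω, ‖G p - F p‖ ^ 2
        = ‖(G p - rot ((p.1 : ℝ) * θ) (F (p + (0,1))))
            + (rot ((p.1 : ℝ) * θ) (F (p + (0,1))) - F p)‖ ^ 2 := by
      intro p _
      rw [sub_add_sub_cancel]
    rw [Finset.sum_congr rfl e]
    refine h.trans ?_
    rw [hGVF]
  -- error bounds
  have errbound : ∀ Z : (ℤ × ℤ) → WithLp 2 (H × H), (∑ p ∈ Ω, ‖Z p‖ ^ 2) = n →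
      |∑ p ∈ Ω, ⟪rot θ (G p - F p) - (G p - F p), Z p⟫| ≤ δ * (a + b) * t := by
    intro Z hZn
    have h1 := sum_inner_le Ω (fun p => rot θ (G p - F p) - (G p - F p)) Z
    have h2 : ∑ p ∈ Ω, ‖rot θ (G p - F p) - (G p - F p)‖ ^ 2 ≤ (δ * (a + b)) ^ 2 := by
      have point : ∀ p ∈ Ω, ‖rot θ (G p - F p) - (G p - F p)‖ ^ 2
          ≤ δ ^ 2 * ‖G p - F p‖ ^ 2 := by
        intro p _
        rw [norm_rot_sub_self_sq]
        apply mul_le_mul_of_nonneg_right _ (sq_nonneg _)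
        exact hB
      calc ∑ p ∈ Ω, ‖rot θ (G p - F p) - (G p - F p)‖ ^ 2
          ≤ ∑ p ∈ Ω, δ ^ 2 * ‖G p - F p‖ ^ 2 := Finset.sum_le_sum point
        _ = δ ^ 2 * ∑ p ∈ Ω, ‖G p - F p‖ ^ 2 := by rw [Finset.mul_sum]
        _ ≤ δ ^ 2 * (a + b) ^ 2 := by
            apply mul_le_mul_of_nonneg_left hW (sq_nonneg _)
        _ = (δ * (a + b)) ^ 2 := by ring
    have h3 : Real.sqrt (∑ p ∈ Ω, ‖rot θ (G p - F p) - (G p - F p)‖ ^ 2) ≤ δ * (a + b) := by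
      refine (Real.sqrt_le_sqrt h2).trans ?_
      rw [Real.sqrt_sq (by positivity)]
    have h4 : Real.sqrt (∑ p ∈ Ω, ‖Z p‖ ^ 2) = t := by rw [hZn]
    refine h1.trans ?_
    rw [h4]
    apply mul_le_mul_of_nonneg_right h3 ht0
  -- decomposition
  have decomp : ∀ Z : (ℤ × ℤ) → WithLp 2 (H × H),
      ∑ p ∈ Ω, ⟪rot θ (F p) - F p, Z p⟫
        = (∑ p ∈ Ω, ⟪rot θ (G p) - G p, Z p⟫)
          - ∑ p ∈ Ω, ⟪rot θ (G p - F p) - (G p - F p), Z p⟫ := by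
    intro Z
    rw [← Finset.sum_sub_distrib]
    refine Finset.sum_congr rfl fun p _ => ?_
    rw [rot_sub]
    rw [← inner_sub_left]
    congr 1
    abel
  -- left-hand sides
  have LF : ∑ p ∈ Ω, ⟪rot θ (F p) - F p, F p⟫ = (Real.cos θ - 1) * n := by
    rw [hn, Finset.mul_sum]
    refine Finset.sum_congr rfl fun p _ => ?_
    rw [inner_sub_left, inner_rot_self, real_inner_self_eq_norm_sq]
    ring
  have LJ : ∑ p ∈ Ω, ⟪rot θ (F p) - F p, Jop (F p)⟫ = -Real.sin θ * n := by
    rw [hn, Finset.mul_sum]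
    refine Finset.sum_congr rfl fun p _ => ?_
    rw [inner_sub_left, inner_rot_J, inner_J_self]
    ring
  have hJn : (∑ p ∈ Ω, ‖Jop (F p)‖ ^ 2) = n := by
    rw [hn]
    exact Finset.sum_congr rfl fun p _ => by rw [norm_J]
  -- the two key inequalities
  have KEY1 : (1 - Real.cos θ) * n ≤ 2 * a * b + δ * (a + b) * t := by
    have hd := decomp F
    rw [LF] at hd
    have e1 := errbound F rfl
    have : (1 - Real.cos θ) * n
        = (∑ p ∈ Ω, ⟪rot θ (G p - F p) - (G p - F p), F p⟫)
          - ∑ p ∈ Ω, ⟪rot θ (G p) - G p, F p⟫ := by linarith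
    rw [this]
    have := abs_sub (∑ p ∈ Ω, ⟪rot θ (G p - F p) - (G p - F p), F p⟫)
      (∑ p ∈ Ω, ⟪rot θ (G p) - G p, F p⟫)
    calc _ ≤ |(∑ p ∈ Ω, ⟪rot θ (G p - F p) - (G p - F p), F p⟫)
          - ∑ p ∈ Ω, ⟪rot θ (G p) - G p, F p⟫| := le_abs_self _
      _ ≤ _ := by
          refine (abs_sub _ _).trans ?_
          linarith [pbF, errbound F rfl]
  have KEY2 : |Real.sin θ| * n ≤ 2 * a * b + δ * (a + b) * t := by
    have hd := decomp (fun p => Jop (F p))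
    rw [LJ] at hd
    have : |Real.sin θ| * n = |(-Real.sin θ) * n| := by
      rw [abs_mul, abs_neg, abs_of_nonneg hn0]
    rw [this, hd]
    refine (abs_sub _ _).trans ?_
    linarith [pbJ, errbound (fun p => Jop (F p)) hJn]
  -- combine
  have hsum : (δ / Real.pi) * n ≤ 4 * a * b + 2 * (δ * (a + b) * t) := by
    have h := mul_le_mul_of_nonneg_right hA hn0
    calc (δ / Real.pi) * n ≤ ((1 - Real.cos θ) + |Real.sin θ|) * n := h
      _ = (1 - Real.cos θ) * n + |Real.sin θ| * n := by ring
      _ ≤ _ := by linarith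
  have hE : 4 * a * b ≤ 2 * (a2 + b2) := by nlinarith [sq_nonneg (a - b)]
  have hs2 : (a + b) ^ 2 ≤ 2 * (a2 + b2) := by nlinarith [sq_nonneg (a - b)]
  have hE0 : (0:ℝ) ≤ a2 + b2 := by linarith
  rcases le_or_gt (a + b) (t / (4 * Real.pi)) with hcase | hcase
  · have hab0 : 0 ≤ a + b := by linarith
    have h1 : 2 * (δ * (a + b) * t) ≤ δ * t ^ 2 / (2 * Real.pi) := by
      have h2 : δ * (a + b) * t ≤ δ * (t / (4 * Real.pi)) * t := by
        apply mul_le_mul_of_nonneg_right _ ht0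
        exact mul_le_mul_of_nonneg_left hcase hδ0
      have h3 : 2 * (δ * (t / (4 * Real.pi)) * t) = δ * t ^ 2 / (2 * Real.pi) := by
        field_simp
        ring
      linarith
    have h4 : (δ / Real.pi) * n ≤ 2 * (a2 + b2) + δ * n / (2 * Real.pi) := by
      calc (δ / Real.pi) * n ≤ 4 * a * b + 2 * (δ * (a + b) * t) := hsum
        _ ≤ 2 * (a2 + b2) + δ * t ^ 2 / (2 * Real.pi) := by linarith
        _ = 2 * (a2 + b2) + δ * n / (2 * Real.pi) := by rw [ht]
    have h5 : δ * n / (2 * Real.pi) ≤ 2 * (a2 + b2) := by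
      have : (δ / Real.pi) * n - δ * n / (2 * Real.pi) = δ * n / (2 * Real.pi) := by
        field_simp
        ring
      linarith
    have h6 : δ * n ≤ 4 * Real.pi * (a2 + b2) := by
      rw [div_le_iff₀ (by positivity)] at h5
      linarith
    have h7 : 4 * Real.pi ≤ 32 * Real.pi ^ 3 := by nlinarith [hπ3, hπ, sq_nonneg (Real.pi - 3)]
    calc δ * n ≤ 4 * Real.pi * (a2 + b2) := h6
      _ ≤ 32 * Real.pi ^ 3 * (a2 + b2) := mul_le_mul_of_nonneg_right h7 hE0
  · have h1 : t ^ 2 ≤ (4 * Real.pi * (a + b)) ^ 2 := by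
      have hpos : 0 ≤ 4 * Real.pi * (a + b) := by nlinarith
      have : t ≤ 4 * Real.pi * (a + b) := by
        rw [div_lt_iff₀ (by positivity)] at hcase
        nlinarith
      nlinarith
    have h2 : n ≤ 32 * Real.pi ^ 2 * (a2 + b2) := by
      rw [← ht]
      calc t ^ 2 ≤ (4 * Real.pi * (a + b)) ^ 2 := h1
        _ = 16 * Real.pi ^ 2 * (a + b) ^ 2 := by ring
        _ ≤ 16 * Real.pi ^ 2 * (2 * (a2 + b2)) := by
            apply mul_le_mul_of_nonneg_left hs2 (by positivity)
        _ = 32 * Real.pi ^ 2 * (a2 + b2) := by ring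
    calc δ * n ≤ Real.pi * n := mul_le_mul_of_nonneg_right hδπ hn0
      _ ≤ Real.pi * (32 * Real.pi ^ 2 * (a2 + b2)) := mul_le_mul_of_nonneg_left h2 hπ.le
      _ = 32 * Real.pi ^ 3 * (a2 + b2) := by ring

end Core

end HeisAux


namespace HeisAux

open scoped BigOperators RealInnerProductSpace
open Finset

set_option linter.unusedSectionVars false
set_option maxHeartbeats 1000000

variable {H : Type*} [NormedAddCommGroup H] [InnerProductSpace ℝ H]

lemma four_zero (θ : ℝ) (W : Finset ℤ) (f : ℤ → H) (h : ∀ z, f z = 0) :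
    four θ W f = 0 :=
  Kext (by simp [four, h, WithLp.zero_fst]) (by simp [four, h, WithLp.zero_snd])

/-- The box of side `2M+4` in `ℤ²`. -/
noncomputable def box (M : ℕ) : Finset (ℤ × ℤ) :=
  Finset.Icc (-(M:ℤ)-2, -(M:ℤ)-2) ((M:ℤ)+2, (M:ℤ)+2)

lemma mem_box {M : ℕ} {p : ℤ × ℤ} :
    p ∈ box M ↔ (-(M:ℤ)-2 ≤ p.1 ∧ p.1 ≤ (M:ℤ)+2) ∧ (-(M:ℤ)-2 ≤ p.2 ∧ p.2 ≤ (M:ℤ)+2) := by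
  simp only [box, Finset.mem_Icc, Prod.le_def]
  tauto

/-- The window of radius `2M+K` in `ℤ`. -/
noncomputable def win (M K : ℕ) : Finset ℤ := Finset.Icc (-(2*(M:ℤ)+K)) (2*(M:ℤ)+K)

/-- Main inequality in real-variable form. -/
lemma main_real (ψ : ℤ × ℤ → ℤ → H) (M K : ℕ) (hM : 1 ≤ M) (hK : 1 ≤ K)
    (hsupp : ∀ p z, ψ p z ≠ 0 → |p.1| ≤ (M:ℤ) ∧ |p.2| ≤ (M:ℤ) ∧ |z| ≤ (M:ℤ)) :
    ∑ k ∈ Finset.Icc 1 K,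
        (∑ p ∈ box M, ∑ z ∈ win M K, ‖ψ p (z + k) - ψ p z‖ ^ 2) / (k:ℝ)^2
      ≤ 288 * Real.pi ^ 3 *
        ∑ p ∈ box M, ∑ z ∈ win M K,
          (‖ψ (p + (1,0)) z - ψ p z‖ ^ 2 + ‖ψ (p + (0,1)) (z + p.1) - ψ p z‖ ^ 2) := by
  have hπ := Real.pi_pos
  set L : ℤ := 2*(M:ℤ) + K with hLdef
  have hL1 : 1 ≤ L := by rw [hLdef]; omega
  set N : ℕ := 4*M + 2*K + 1 with hNdef
  have hN0 : 0 < N := by omega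
  have hNR : (0:ℝ) < (N:ℝ) := by exact_mod_cast hN0
  have h2L : 2 * L < (N : ℤ) := by
    rw [hLdef, hNdef]
    push_cast
    omega
  have hwin : win M K = Finset.Icc (-L) L := by rw [win, hLdef]
  set θ : ℕ → ℝ := fun j => 2 * Real.pi * j / N with hθdef
  have hθ0 : ∀ j, 0 ≤ θ j := by
    intro j
    rw [hθdef]
    positivity
  have hθ2 : ∀ j ∈ Finset.range N, θ j ≤ 2 * Real.pi := by
    intro j hj
    rw [Finset.mem_range] at hj
    rw [hθdef]
    simp only []
    rw [div_le_iff₀ hNR]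
    have : (j:ℝ) ≤ (N:ℝ) := by exact_mod_cast hj.le
    nlinarith
  set Fj : ℕ → (ℤ × ℤ) → WithLp 2 (H × H) :=
    fun j p => four (θ j) (Finset.Icc (-L) L) (ψ p) with hFjdef
  -- support facts
  have hFsupp : ∀ j p, Fj j p ≠ 0 → |p.1| ≤ (M:ℤ) ∧ |p.2| ≤ (M:ℤ) := by
    intro j p hF
    have : ¬ ∀ z, ψ p z = 0 := by
      intro hz
      exact hF (four_zero _ _ _ hz)
    push_neg at this
    obtain ⟨z, hz⟩ := this
    exact ⟨(hsupp p z hz).1, (hsupp p z hz).2.1⟩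
  -- P1
  have P1 : ∀ k ∈ Finset.Icc 1 K, ∀ p : ℤ × ℤ,
      ∑ j ∈ Finset.range N, (2 - 2*Real.cos ((k:ℝ) * θ j)) * ‖Fj j p‖^2
        = (N:ℝ) * ∑ z ∈ Finset.Icc (-L) L, ‖ψ p (z + k) - ψ p z‖^2 := by
    intro k hk p
    rw [Finset.mem_Icc] at hk
    have hdiff : ∀ j, four (θ j) (Finset.Icc (-L) L) (fun z => ψ p (z + (k:ℤ)) - ψ p z)
        = rot (((k:ℤ):ℝ) * θ j) (Fj j p) - Fj j p := by
      intro j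
      rw [four_sub, four_shift (θ j) L (M:ℤ) (k:ℤ) (ψ p) (fun z hz => (hsupp p z hz).2.2)
        (by
          rw [hLdef]
          have : |(k:ℤ)| = (k:ℤ) := abs_of_nonneg (by positivity)
          omega)]
    have hnorm : ∀ j, ‖four (θ j) (Finset.Icc (-L) L) (fun z => ψ p (z + (k:ℤ)) - ψ p z)‖^2
        = (2 - 2*Real.cos ((k:ℝ) * θ j)) * ‖Fj j p‖^2 := by
      intro j
      rw [hdiff j, norm_rot_sub_self_sq]
      norm_num
    have hpars := parseval N hN0 L h2L (fun z => ψ p (z + (k:ℤ)) - ψ p z)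
      (by
        intro z hz
        have : ψ p (z + (k:ℤ)) ≠ 0 ∨ ψ p z ≠ 0 := by
          by_contra hcon
          push_neg at hcon
          apply hz
          simp [hcon.1, hcon.2]
        rcases this with h | h
        · have := (hsupp p _ h).2.2
          rw [hLdef]
          have hkK : (k:ℤ) ≤ (K:ℤ) := by exact_mod_cast hk.2
          have hk0 : (0:ℤ) ≤ (k:ℤ) := by positivity
          rcases abs_le.1 this with ⟨h1, h2⟩
          rw [abs_le]
          omega
        · have := (hsupp p _ h).2.2
          rw [hLdef]
          rcases abs_le.1 this with ⟨h1, h2⟩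
          rw [abs_le]
          constructor <;> omega)
    rw [← hpars]
    refine Finset.sum_congr rfl fun j _ => ?_
    exact (hnorm j).symm
  -- P2
  have P2 : ∀ p : ℤ × ℤ,
      ∑ j ∈ Finset.range N, ‖Fj j (p + (1,0)) - Fj j p‖^2
        = (N:ℝ) * ∑ z ∈ Finset.Icc (-L) L, ‖ψ (p + (1,0)) z - ψ p z‖^2 := by
    intro p
    have hpars := parseval N hN0 L h2L (fun z => ψ (p + (1,0)) z - ψ p z)
      (by
        intro z hz
        have : ψ (p + (1,0)) z ≠ 0 ∨ ψ p z ≠ 0 := by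
          by_contra hcon
          push_neg at hcon
          apply hz
          simp [hcon.1, hcon.2]
        have hzM : |z| ≤ (M:ℤ) := by
          rcases this with h | h
          · exact (hsupp _ _ h).2.2
          · exact (hsupp _ _ h).2.2
        rw [hLdef]
        rcases abs_le.1 hzM with ⟨h1, h2⟩
        rw [abs_le]
        constructor <;> omega)
    rw [← hpars]
    refine Finset.sum_congr rfl fun j _ => ?_
    rw [four_sub]
  -- P3
  have P3 : ∀ p : ℤ × ℤ,
      ∑ j ∈ Finset.range N, ‖rot ((p.1:ℝ) * θ j) (Fj j (p + (0,1))) - Fj j p‖^2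
        = (N:ℝ) * ∑ z ∈ Finset.Icc (-L) L, ‖ψ (p + (0,1)) (z + p.1) - ψ p z‖^2 := by
    intro p
    by_cases hcase : ∀ z, ψ (p + (0,1)) z = 0
    · -- the shifted function vanishes
      have hF0 : ∀ j, Fj j (p + (0,1)) = 0 := fun j => four_zero _ _ _ hcase
      have hpars := parseval N hN0 L h2L (ψ p)
        (by
          intro z hz
          rcases abs_le.1 (hsupp _ _ hz).2.2 with ⟨h1, h2⟩
          rw [hLdef, abs_le]
          constructor <;> omega)
      calc ∑ j ∈ Finset.range N, ‖rot ((p.1:ℝ) * θ j) (Fj j (p + (0,1))) - Fj j p‖^2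
          = ∑ j ∈ Finset.range N, ‖Fj j p‖^2 := by
            refine Finset.sum_congr rfl fun j _ => ?_
            rw [hF0 j, rot_zero', zero_sub, norm_neg]
        _ = (N:ℝ) * ∑ z ∈ Finset.Icc (-L) L, ‖ψ p z‖^2 := hpars
        _ = (N:ℝ) * ∑ z ∈ Finset.Icc (-L) L, ‖ψ (p + (0,1)) (z + p.1) - ψ p z‖^2 := by
            congr 1
            refine Finset.sum_congr rfl fun z _ => ?_
            rw [hcase (z + p.1), zero_sub, norm_neg]
    · -- the genuine case : |p.1| ≤ M
      push_neg at hcase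
      obtain ⟨z₀, hz₀⟩ := hcase
      have hp1 : |p.1| ≤ (M:ℤ) := by
        have := (hsupp _ _ hz₀).1
        simpa using this
      have hshift : ∀ j, four (θ j) (Finset.Icc (-L) L) (fun z => ψ (p + (0,1)) (z + p.1))
          = rot ((p.1:ℝ) * θ j) (Fj j (p + (0,1))) := by
        intro j
        exact four_shift (θ j) L (M:ℤ) p.1 (ψ (p + (0,1)))
          (fun z hz => (hsupp _ _ hz).2.2)
          (by
            rw [hLdef]
            rcases abs_le.1 hp1 with ⟨h1, h2⟩
            have : |p.1| ≤ (M:ℤ) := hp1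
            omega)
      have hpars := parseval N hN0 L h2L (fun z => ψ (p + (0,1)) (z + p.1) - ψ p z)
        (by
          intro z hz
          have : ψ (p + (0,1)) (z + p.1) ≠ 0 ∨ ψ p z ≠ 0 := by
            by_contra hcon
            push_neg at hcon
            apply hz
            simp [hcon.1, hcon.2]
          rw [hLdef, abs_le]
          rcases this with h | h
          · rcases abs_le.1 (hsupp _ _ h).2.2 with ⟨h1, h2⟩
            rcases abs_le.1 hp1 with ⟨h3, h4⟩
            constructor <;> omega
          · rcases abs_le.1 (hsupp _ _ h).2.2 with ⟨h1, h2⟩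
            constructor <;> omega)
      rw [← hpars]
      refine Finset.sum_congr rfl fun j _ => ?_
      rw [four_sub, hshift j]
  -- core inequality per j
  have CORE : ∀ j ∈ Finset.range N,
      min (θ j) (2*Real.pi - θ j) * ∑ p ∈ box M, ‖Fj j p‖^2
        ≤ 32 * Real.pi^3 *
          ((∑ p ∈ box M, ‖Fj j (p + (1,0)) - Fj j p‖^2)
            + ∑ p ∈ box M, ‖rot ((p.1:ℝ) * θ j) (Fj j (p + (0,1))) - Fj j p‖^2) := by
    intro j hj
    have hθ2j := hθ2 j hj
    refine core_uncertainty (Fj j) (box M) (θ j) (min (θ j) (2*Real.pi - θ j)) ?_ ?_ ?_ ?_ ?_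
    · intro p w hw1 hw2 hF v hv1 hv2
      have h := hFsupp j _ hF
      rw [Prod.fst_add, Prod.snd_add] at h
      rw [mem_box]
      rcases abs_le.1 h.1 with ⟨a1, a2⟩
      rcases abs_le.1 h.2 with ⟨b1, b2⟩
      rcases abs_le.1 hw1 with ⟨c1, c2⟩
      rcases abs_le.1 hw2 with ⟨d1, d2⟩
      rcases abs_le.1 hv1 with ⟨e1, e2⟩
      rcases abs_le.1 hv2 with ⟨f1, f2⟩
      simp only [Prod.fst_sub, Prod.snd_sub]
      constructor <;> constructor <;> omega
    · exact le_min (hθ0 j) (by linarith)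
    · rcases le_total (θ j) (2*Real.pi - θ j) with h | h
      · rw [min_eq_left h]; linarith
      · rw [min_eq_right h]; linarith [hθ0 j]
    · exact jordan_lower (θ j) (hθ0 j) hθ2j
    · have := two_sub_cos_le (θ j) (hθ0 j) hθ2j 1
      simpa using this
  -- weight bound per j
  have WT : ∀ j ∈ Finset.range N,
      ∑ k ∈ Finset.Icc 1 K, (2 - 2*Real.cos ((k:ℝ) * θ j)) / (k:ℝ)^2
        ≤ 9 * min (θ j) (2*Real.pi - θ j) :=
    fun j hj => weight_sum_le (θ j) (hθ0 j) (hθ2 j hj) K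
  -- assembly
  set nrm : ℕ → ℝ := fun j => ∑ p ∈ box M, ‖Fj j p‖^2 with hnrm
  set A2 : ℕ → ℝ := fun j => ∑ p ∈ box M, ‖Fj j (p + (1,0)) - Fj j p‖^2 with hA2
  set B2 : ℕ → ℝ := fun j =>
    ∑ p ∈ box M, ‖rot ((p.1:ℝ) * θ j) (Fj j (p + (0,1))) - Fj j p‖^2 with hB2
  have hnrm0 : ∀ j, 0 ≤ nrm j := fun j => Finset.sum_nonneg fun p _ => sq_nonneg _
  set E : ℝ := ∑ p ∈ box M, ∑ z ∈ win M K,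
    (‖ψ (p + (1,0)) z - ψ p z‖ ^ 2 + ‖ψ (p + (0,1)) (z + p.1) - ψ p z‖ ^ 2) with hE
  -- step 1 : N * D_k = ∑_j (2-2cos kθ_j) nrm j
  have step1 : ∀ k ∈ Finset.Icc 1 K,
      (N:ℝ) * ∑ p ∈ box M, ∑ z ∈ win M K, ‖ψ p (z + k) - ψ p z‖^2
        = ∑ j ∈ Finset.range N, (2 - 2*Real.cos ((k:ℝ) * θ j)) * nrm j := by
    intro k hk
    rw [hwin, Finset.mul_sum]
    calc ∑ p ∈ box M, (N:ℝ) * ∑ z ∈ Finset.Icc (-L) L, ‖ψ p (z + k) - ψ p z‖^2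
        = ∑ p ∈ box M, ∑ j ∈ Finset.range N, (2 - 2*Real.cos ((k:ℝ) * θ j)) * ‖Fj j p‖^2 :=
          Finset.sum_congr rfl fun p _ => (P1 k hk p).symm
      _ = ∑ j ∈ Finset.range N, ∑ p ∈ box M, (2 - 2*Real.cos ((k:ℝ) * θ j)) * ‖Fj j p‖^2 :=
          Finset.sum_comm
      _ = ∑ j ∈ Finset.range N, (2 - 2*Real.cos ((k:ℝ) * θ j)) * nrm j := by
          refine Finset.sum_congr rfl fun j _ => ?_
          rw [hnrm, Finset.mul_sum]
  -- step 2 : N * E = ∑_j (A2 j + B2 j)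
  have step2 : (N:ℝ) * E = ∑ j ∈ Finset.range N, (A2 j + B2 j) := by
    rw [hE, hwin, Finset.mul_sum]
    calc ∑ p ∈ box M, (N:ℝ) * ∑ z ∈ Finset.Icc (-L) L,
          (‖ψ (p + (1,0)) z - ψ p z‖ ^ 2 + ‖ψ (p + (0,1)) (z + p.1) - ψ p z‖ ^ 2)
        = ∑ p ∈ box M, (∑ j ∈ Finset.range N, ‖Fj j (p + (1,0)) - Fj j p‖^2
            + ∑ j ∈ Finset.range N,
              ‖rot ((p.1:ℝ) * θ j) (Fj j (p + (0,1))) - Fj j p‖^2) := by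
          refine Finset.sum_congr rfl fun p _ => ?_
          rw [Finset.sum_add_distrib, mul_add, P2 p, P3 p]
      _ = (∑ p ∈ box M, ∑ j ∈ Finset.range N, ‖Fj j (p + (1,0)) - Fj j p‖^2)
          + ∑ p ∈ box M, ∑ j ∈ Finset.range N,
              ‖rot ((p.1:ℝ) * θ j) (Fj j (p + (0,1))) - Fj j p‖^2 := by
          rw [Finset.sum_add_distrib]
      _ = ∑ j ∈ Finset.range N, (A2 j + B2 j) := by
          rw [Finset.sum_comm (s := box M) (t := Finset.range N),
            Finset.sum_comm (s := box M) (t := Finset.range N),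
            ← Finset.sum_add_distrib]
  -- final chain
  have final : (N:ℝ) * ∑ k ∈ Finset.Icc 1 K,
      (∑ p ∈ box M, ∑ z ∈ win M K, ‖ψ p (z + k) - ψ p z‖ ^ 2) / (k:ℝ)^2
        ≤ (N:ℝ) * (288 * Real.pi ^ 3 * E) := by
    calc (N:ℝ) * ∑ k ∈ Finset.Icc 1 K,
        (∑ p ∈ box M, ∑ z ∈ win M K, ‖ψ p (z + k) - ψ p z‖ ^ 2) / (k:ℝ)^2
        = ∑ k ∈ Finset.Icc 1 K,
            ((N:ℝ) * ∑ p ∈ box M, ∑ z ∈ win M K, ‖ψ p (z + k) - ψ p z‖ ^ 2) / (k:ℝ)^2 := by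
          rw [Finset.mul_sum]
          refine Finset.sum_congr rfl fun k _ => ?_
          ring
      _ = ∑ k ∈ Finset.Icc 1 K, (∑ j ∈ Finset.range N,
            (2 - 2*Real.cos ((k:ℝ) * θ j)) * nrm j) / (k:ℝ)^2 := by
          refine Finset.sum_congr rfl fun k hk => ?_
          rw [step1 k hk]
      _ = ∑ k ∈ Finset.Icc 1 K, ∑ j ∈ Finset.range N,
            ((2 - 2*Real.cos ((k:ℝ) * θ j)) * nrm j) / (k:ℝ)^2 := by
          refine Finset.sum_congr rfl fun k _ => ?_
          rw [Finset.sum_div]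
      _ = ∑ j ∈ Finset.range N, ∑ k ∈ Finset.Icc 1 K,
            ((2 - 2*Real.cos ((k:ℝ) * θ j)) * nrm j) / (k:ℝ)^2 := Finset.sum_comm
      _ = ∑ j ∈ Finset.range N,
            (∑ k ∈ Finset.Icc 1 K, (2 - 2*Real.cos ((k:ℝ) * θ j)) / (k:ℝ)^2) * nrm j := by
          refine Finset.sum_congr rfl fun j _ => ?_
          rw [Finset.sum_mul]
          refine Finset.sum_congr rfl fun k _ => ?_
          ring
      _ ≤ ∑ j ∈ Finset.range N, 288 * Real.pi^3 * (A2 j + B2 j) := by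
          refine Finset.sum_le_sum fun j hj => ?_
          have h1 := WT j hj
          have h2 := CORE j hj
          have h3 := hnrm0 j
          have h4 : (∑ k ∈ Finset.Icc 1 K, (2 - 2*Real.cos ((k:ℝ) * θ j)) / (k:ℝ)^2) * nrm j
              ≤ 9 * min (θ j) (2*Real.pi - θ j) * nrm j :=
            mul_le_mul_of_nonneg_right h1 h3
          calc (∑ k ∈ Finset.Icc 1 K, (2 - 2*Real.cos ((k:ℝ) * θ j)) / (k:ℝ)^2) * nrm j
              ≤ 9 * (min (θ j) (2*Real.pi - θ j) * nrm j) := by linarith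
            _ ≤ 9 * (32 * Real.pi^3 * (A2 j + B2 j)) := by
                apply mul_le_mul_of_nonneg_left _ (by norm_num : (0:ℝ) ≤ 9)
                exact h2
            _ = 288 * Real.pi^3 * (A2 j + B2 j) := by ring
      _ = 288 * Real.pi^3 * ((N:ℝ) * E) := by
          rw [step2, Finset.mul_sum]
      _ = (N:ℝ) * (288 * Real.pi ^ 3 * E) := by ring
  have := (mul_le_mul_iff_right₀ hNR).1 final
  rw [hE] at this
  exact this

end HeisAux


open scoped BigOperators
open Finset

namespace HeisAux

lemma heis_C_eq : Heis.C = ⟨0, 0, 1⟩ := by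
  have : Heis.C = Heis.A * Heis.B * Heis.A⁻¹ * Heis.B⁻¹ := rfl
  rw [this]
  ext <;> simp [Heis.A, Heis.B]

lemma heis_pow_C (k : ℕ) : Heis.C ^ k = ⟨0, 0, (k:ℤ)⟩ := by
  induction k with
  | zero => rw [pow_zero]; rfl
  | succ n ih =>
    rw [pow_succ, ih, heis_C_eq]
    ext <;> simp <;> push_cast <;> ring

lemma heis_mul_Cpow (g : Heis) (k : ℕ) : g * Heis.C ^ k = ⟨g.x, g.y, g.z + k⟩ := by
  rw [heis_pow_C]
  ext <;> simp

lemma heis_mul_A (g : Heis) : g * Heis.A = ⟨g.x + 1, g.y, g.z⟩ := by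
  ext <;> simp [Heis.A]

lemma heis_mul_B (g : Heis) : g * Heis.B = ⟨g.x, g.y + 1, g.z + g.x⟩ := by
  ext <;> simp [Heis.B]

lemma range_to_Icc (K : ℕ) (g : ℕ → ℝ) :
    ∑ k ∈ Finset.range K, g (k + 1) = ∑ k ∈ Finset.Icc 1 K, g k := by
  induction K with
  | zero => simp
  | succ n ih =>
    rw [Finset.sum_range_succ, ih, Finset.sum_Icc_succ_top (by omega : 1 ≤ n + 1)]

end HeisAux

open HeisAux in
/-- **Poincaré inequality for finitely supported functions (eq. 6.3).** There is a universal
`C > 0` such that for every finitely supported `φ : ℍ → H` into a Hilbert space,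
`∑_{x ∈ ℍ} ∑_{k=1}^∞ ‖φ(xc^k) − φ(x)‖²/k²
  ≤ C·∑_{x ∈ ℍ} (‖φ(xa) − φ(x)‖² + ‖φ(xb) − φ(x)‖²)`. -/
theorem heisenberg_finitely_supported_poincare :
    ∃ C : ℝ, 0 < C ∧
      ∀ (H : Type*) [NormedAddCommGroup H] [InnerProductSpace ℝ H] [CompleteSpace H],
        ∀ φ : Heis → H, (Function.support φ).Finite →
          (∑' (g : Heis) (k : ℕ),
              ENNReal.ofReal
                (‖φ (g * Heis.C ^ (k + 1)) - φ g‖ ^ 2 / ((k : ℝ) + 1) ^ 2)) ≤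
            ENNReal.ofReal C *
              ∑' g : Heis,
                ENNReal.ofReal
                  (‖φ (g * Heis.A) - φ g‖ ^ 2 + ‖φ (g * Heis.B) - φ g‖ ^ 2) := by
  classical
  have hπ := Real.pi_pos
  refine ⟨288 * Real.pi ^ 3, by positivity, ?_⟩
  intro H _ _ _ φ hfin
  set S : Finset Heis := hfin.toFinset with hS
  set M : ℕ := (S.sup fun g => g.x.natAbs ⊔ g.y.natAbs ⊔ g.z.natAbs) ⊔ 1 with hMdef
  have hM1 : 1 ≤ M := le_sup_right
  have hbound : ∀ g : Heis, φ g ≠ 0 →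
      |g.x| ≤ (M:ℤ) ∧ |g.y| ≤ (M:ℤ) ∧ |g.z| ≤ (M:ℤ) := by
    intro g hg
    have hgS : g ∈ S := by
      rw [hS, Set.Finite.mem_toFinset]
      exact hg
    have hsup := Finset.le_sup (f := fun g : Heis => g.x.natAbs ⊔ g.y.natAbs ⊔ g.z.natAbs) hgS
    have h1 : g.x.natAbs ≤ M := le_trans (le_trans (le_sup_left.trans le_sup_left) hsup)
      le_sup_left
    have h2 : g.y.natAbs ≤ M := le_trans (le_trans (le_sup_right.trans le_sup_left) hsup)
      le_sup_left
    have h3 : g.z.natAbs ≤ M := le_trans (le_trans le_sup_right hsup) le_sup_left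
    refine ⟨?_, ?_, ?_⟩ <;> rw [Int.abs_eq_natAbs] <;> exact_mod_cast ‹_ ≤ M›
  set ψ : ℤ × ℤ → ℤ → H := fun p z => φ ⟨p.1, p.2, z⟩ with hψdef
  have hψsupp : ∀ p z, ψ p z ≠ 0 → |p.1| ≤ (M:ℤ) ∧ |p.2| ≤ (M:ℤ) ∧ |z| ≤ (M:ℤ) := by
    intro p z h
    exact hbound _ h
  set f : (ℤ × ℤ) × ℤ → Heis := fun q => ⟨q.1.1, q.1.2, q.2⟩ with hfdef
  have hfinj : Function.Injective f := by
    intro q q' h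
    rw [hfdef] at h
    simp only [Heis.mk.injEq] at h
    exact Prod.ext (Prod.ext h.1 h.2.1) h.2.2
  -- term translations
  have hterm_e : ∀ (p : ℤ × ℤ) (z : ℤ),
      ‖φ (f (p, z) * Heis.A) - φ (f (p, z))‖ ^ 2 + ‖φ (f (p, z) * Heis.B) - φ (f (p, z))‖ ^ 2
        = ‖ψ (p + (1,0)) z - ψ p z‖ ^ 2 + ‖ψ (p + (0,1)) (z + p.1) - ψ p z‖ ^ 2 := by
    intro p z
    rw [heis_mul_A, heis_mul_B]
    simp only [hfdef, hψdef, Prod.fst_add, Prod.snd_add]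
    norm_num
  have hterm_a : ∀ (p : ℤ × ℤ) (z : ℤ) (k : ℕ),
      ‖φ (f (p, z) * Heis.C ^ (k + 1)) - φ (f (p, z))‖ ^ 2 / ((k : ℝ) + 1) ^ 2
        = ‖ψ p (z + ((k:ℕ) + 1 : ℕ)) - ψ p z‖ ^ 2 / (((k + 1 : ℕ)) : ℝ) ^ 2 := by
    intro p z k
    rw [heis_mul_Cpow]
    simp only [hfdef, hψdef]
    norm_num
  -- the energy sums
  have hE_eq : ∀ K : ℕ,
      (∑ p ∈ HeisAux.box M, ∑ z ∈ win M K,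
        (‖ψ (p + (1,0)) z - ψ p z‖ ^ 2 + ‖ψ (p + (0,1)) (z + p.1) - ψ p z‖ ^ 2))
      = ∑ g ∈ (HeisAux.box M ×ˢ win M K).image f,
          (‖φ (g * Heis.A) - φ g‖ ^ 2 + ‖φ (g * Heis.B) - φ g‖ ^ 2) := by
    intro K
    rw [Finset.sum_image (fun q _ q' _ h => hfinj h)]
    rw [Finset.sum_product]
    refine Finset.sum_congr rfl fun p _ => Finset.sum_congr rfl fun z _ => ?_
    exact (hterm_e p z).symm
  have hRHS : ∀ K : ℕ,
      ENNReal.ofReal (∑ p ∈ HeisAux.box M, ∑ z ∈ win M K,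
        (‖ψ (p + (1,0)) z - ψ p z‖ ^ 2 + ‖ψ (p + (0,1)) (z + p.1) - ψ p z‖ ^ 2))
      ≤ ∑' g : Heis,
          ENNReal.ofReal (‖φ (g * Heis.A) - φ g‖ ^ 2 + ‖φ (g * Heis.B) - φ g‖ ^ 2) := by
    intro K
    rw [hE_eq K]
    rw [ENNReal.ofReal_sum_of_nonneg (fun g _ => by positivity)]
    exact ENNReal.sum_le_tsum _
  -- rewrite the LHS as a single tsum over pairs and bound finite partial sums
  rw [← ENNReal.tsum_prod (f := fun (g : Heis) (k : ℕ) =>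
    ENNReal.ofReal (‖φ (g * Heis.C ^ (k + 1)) - φ g‖ ^ 2 / ((k : ℝ) + 1) ^ 2))]
  rw [ENNReal.tsum_eq_iSup_sum]
  refine iSup_le fun T => ?_
  set K : ℕ := (T.sup fun q => q.2) + 1 with hKdef
  have hK1 : 1 ≤ K := by omega
  -- the real partial sum
  set araw : Heis × ℕ → ℝ :=
    fun q => ‖φ (q.1 * Heis.C ^ (q.2 + 1)) - φ q.1‖ ^ 2 / ((q.2 : ℝ) + 1) ^ 2 with haraw
  have haraw0 : ∀ q, 0 ≤ araw q := fun q => by positivity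
  have hsum_of : ∑ q ∈ T, ENNReal.ofReal
      (‖φ (q.1 * Heis.C ^ (q.2 + 1)) - φ q.1‖ ^ 2 / ((q.2 : ℝ) + 1) ^ 2)
      = ENNReal.ofReal (∑ q ∈ T, araw q) := by
    rw [ENNReal.ofReal_sum_of_nonneg (fun q _ => haraw0 q)]
  -- support of araw
  set T' : Finset (Heis × ℕ) := ((HeisAux.box M ×ˢ win M K).image f) ×ˢ Finset.range K with hT'
  have hsubset : T.filter (fun q => araw q ≠ 0) ⊆ T' := by
    intro q hq
    rw [Finset.mem_filter] at hq
    obtain ⟨hqT, hqne⟩ := hq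
    have hk : q.2 < K := by
      have h := Finset.le_sup (f := fun q : Heis × ℕ => q.2) hqT
      omega
    have hnum : φ (q.1 * Heis.C ^ (q.2 + 1)) ≠ 0 ∨ φ q.1 ≠ 0 := by
      by_contra hcon
      push_neg at hcon
      apply hqne
      rw [haraw]
      simp only []
      rw [hcon.1, hcon.2, sub_zero, norm_zero]
      simp
    have hgmem : q.1 ∈ (HeisAux.box M ×ˢ win M K).image f := by
      have hcoords : |q.1.x| ≤ (M:ℤ) ∧ |q.1.y| ≤ (M:ℤ)
          ∧ -(2*(M:ℤ)+K) ≤ q.1.z ∧ q.1.z ≤ 2*(M:ℤ)+K := by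
        rcases hnum with h | h
        · have := hbound _ h
          rw [heis_mul_Cpow] at this
          simp only at this
          obtain ⟨h1, h2, h3⟩ := this
          rcases abs_le.1 h3 with ⟨h4, h5⟩
          have hkK : (q.2:ℤ) + 1 ≤ (K:ℤ) := by exact_mod_cast hk
          have hM' : (1:ℤ) ≤ (M:ℤ) := by exact_mod_cast hM1
          refine ⟨h1, h2, ?_, ?_⟩ <;> push_cast at h4 h5 ⊢ <;> omega
        · have := hbound _ h
          obtain ⟨h1, h2, h3⟩ := this
          rcases abs_le.1 h3 with ⟨h4, h5⟩
          refine ⟨h1, h2, by omega, by omega⟩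
      rw [Finset.mem_image]
      refine ⟨((q.1.x, q.1.y), q.1.z), ?_, rfl⟩
      simp only [Finset.mem_product, HeisAux.mem_box, HeisAux.win, Finset.mem_Icc]
      rcases abs_le.1 hcoords.1 with ⟨a1, a2⟩
      rcases abs_le.1 hcoords.2.1 with ⟨b1, b2⟩
      exact ⟨⟨⟨by omega, by omega⟩, ⟨by omega, by omega⟩⟩,
        ⟨hcoords.2.2.1, hcoords.2.2.2⟩⟩
    rw [hT', Finset.mem_product, Finset.mem_range]
    exact ⟨hgmem, hk⟩
  have hreal1 : ∑ q ∈ T, araw q ≤ ∑ q ∈ T', araw q := by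
    rw [← Finset.sum_filter_ne_zero (s := T) (f := araw)]
    exact Finset.sum_le_sum_of_subset_of_nonneg hsubset (fun q _ _ => haraw0 q)
  have hreal2 : ∑ q ∈ T', araw q
      = ∑ k ∈ Finset.Icc 1 K,
          (∑ p ∈ HeisAux.box M, ∑ z ∈ win M K, ‖ψ p (z + (k:ℕ)) - ψ p z‖ ^ 2) / (k:ℝ)^2 := by
    rw [hT', Finset.sum_product]
    calc ∑ g ∈ (HeisAux.box M ×ˢ win M K).image f, ∑ k ∈ Finset.range K, araw (g, k)
        = ∑ q ∈ HeisAux.box M ×ˢ win M K, ∑ k ∈ Finset.range K, araw (f q, k) :=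
          Finset.sum_image (fun q _ q' _ h => hfinj h)
      _ = ∑ k ∈ Finset.range K, ∑ q ∈ HeisAux.box M ×ˢ win M K, araw (f q, k) := Finset.sum_comm
      _ = ∑ k ∈ Finset.range K,
            (∑ p ∈ HeisAux.box M, ∑ z ∈ win M K, ‖ψ p (z + ((k+1:ℕ):ℤ)) - ψ p z‖ ^ 2)
              / ((k+1:ℕ):ℝ)^2 := by
          refine Finset.sum_congr rfl fun k _ => ?_
          rw [Finset.sum_product]
          rw [Finset.sum_div]
          refine Finset.sum_congr rfl fun p _ => ?_
          rw [Finset.sum_div]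
          refine Finset.sum_congr rfl fun z _ => ?_
          rw [haraw]
          exact hterm_a p z k
      _ = ∑ k ∈ Finset.Icc 1 K,
            (∑ p ∈ HeisAux.box M, ∑ z ∈ win M K, ‖ψ p (z + (k:ℕ)) - ψ p z‖ ^ 2) / (k:ℝ)^2 := by
          exact range_to_Icc K (fun k =>
            (∑ p ∈ HeisAux.box M, ∑ z ∈ win M K, ‖ψ p (z + (k:ℕ)) - ψ p z‖ ^ 2) / (k:ℝ)^2)
  have hmain := main_real ψ M K hM1 hK1 hψsupp
  have hreal : ∑ q ∈ T, araw q
      ≤ 288 * Real.pi ^ 3 *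
        ∑ p ∈ HeisAux.box M, ∑ z ∈ win M K,
          (‖ψ (p + (1,0)) z - ψ p z‖ ^ 2 + ‖ψ (p + (0,1)) (z + p.1) - ψ p z‖ ^ 2) := by
    calc ∑ q ∈ T, araw q ≤ ∑ q ∈ T', araw q := hreal1
      _ = _ := hreal2
      _ ≤ _ := hmain
  rw [hsum_of]
  calc ENNReal.ofReal (∑ q ∈ T, araw q)
      ≤ ENNReal.ofReal (288 * Real.pi ^ 3 *
          ∑ p ∈ HeisAux.box M, ∑ z ∈ win M K,
            (‖ψ (p + (1,0)) z - ψ p z‖ ^ 2 + ‖ψ (p + (0,1)) (z + p.1) - ψ p z‖ ^ 2)) :=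
        ENNReal.ofReal_le_ofReal hreal
    _ = ENNReal.ofReal (288 * Real.pi ^ 3) * ENNReal.ofReal
          (∑ p ∈ HeisAux.box M, ∑ z ∈ win M K,
            (‖ψ (p + (1,0)) z - ψ p z‖ ^ 2 + ‖ψ (p + (0,1)) (z + p.1) - ψ p z‖ ^ 2)) := by
        rw [ENNReal.ofReal_mul (by positivity)]
    _ ≤ ENNReal.ofReal (288 * Real.pi ^ 3) *
          ∑' g : Heis,
            ENNReal.ofReal (‖φ (g * Heis.A) - φ g‖ ^ 2 + ‖φ (g * Heis.B) - φ g‖ ^ 2) :=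
        mul_le_mul_right (hRHS K) _
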